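/- arXiv:1205.3257 — 3 statements merged into one kernel-verified Lean document; each statement's English description precedes it below -/
import Mathlib

section
/- Let f be a real binary form of degree d ≥ 1. Then f can be written as a sum f = Σ_{i=1}^r c_i (a_i x + b_i y)^d with real coefficients c_i and pairwise non-proportional real linear forms a_i x + b_i y if and only if the binary form p = Π_{i=1}^r (b_i x - a_i y) annihilates f under the apolarity action, i.e., ∂p(f) = 0, where ∂p denotes the differential operator obtained from p by substituting ∂/∂x for x and ∂/∂y for y. -/
open MvPolynomial

noncomputable def diffOp (h f : MvPolynomial (Fin 2) ℝ) : MvPolynomial (Fin 2) ℝ :=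
  ∑ e ∈ h.support, (MvPolynomial.coeff e h) •
    ((fun p => pderiv (0 : Fin 2) p)^[e 0] ((fun p => pderiv (1 : Fin 2) p)^[e 1] f))

noncomputable def lin (a b : ℝ) : MvPolynomial (Fin 2) ℝ := a • X 0 + b • X 1

noncomputable def toForm (m : ℕ) (a : Fin (m + 1) → ℝ) : MvPolynomial (Fin 2) ℝ :=
  ∑ i : Fin (m + 1), a i • (X 0 ^ (i : ℕ) * X 1 ^ (m - (i : ℕ)))

def hasWaringDecomp (d r : ℕ) (f : MvPolynomial (Fin 2) ℝ) : Prop :=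
  ∃ c a b : Fin r → ℝ, f = ∑ i, c i • (lin (a i) (b i)) ^ d

noncomputable def waringRank (d : ℕ) (f : MvPolynomial (Fin 2) ℝ) : ℕ :=
  sInf {r | hasWaringDecomp d r f}

set_option synthInstance.maxHeartbeats 1000000
set_option maxHeartbeats 1000000

noncomputable section
namespace ApolarAux

abbrev R2 := MvPolynomial (Fin 2) ℝ

def P (i : Fin 2) : Module.End ℝ R2 := (pderiv i).toLinearMap

lemma pderiv_pderiv_comm (i j : Fin 2) (f : R2) :
    pderiv i (pderiv j f) = pderiv j (pderiv i f) := by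
  induction f using MvPolynomial.induction_on' with
  | monomial e c =>
    rcases eq_or_ne i j with rfl | hij
    · rfl
    · simp only [pderiv_monomial]
      rw [tsub_right_comm]
      congr 1
      rw [Finsupp.tsub_apply, Finsupp.tsub_apply, Finsupp.single_eq_of_ne hij,
        Finsupp.single_eq_of_ne (Ne.symm hij)]
      simp
      ring
  | add p q hp hq => simp [hp, hq]

lemma commuteP : Commute (P 0) (P 1) :=
  LinearMap.ext fun f => pderiv_pderiv_comm _ _ f

def W (e : Fin 2 →₀ ℕ) : Module.End ℝ R2 := P 0 ^ (e 0) * P 1 ^ (e 1)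

lemma W_add (e e' : Fin 2 →₀ ℕ) : W (e + e') = W e * W e' := by
  unfold W
  rw [Finsupp.add_apply, Finsupp.add_apply, pow_add, pow_add]
  exact (Commute.pow_pow commuteP (e' 0) (e 1)).mul_mul_mul_comm _ _

def D (h : R2) : Module.End ℝ R2 := ∑ e ∈ h.support, MvPolynomial.coeff e h • W e

lemma diffOp_eq (h f : R2) : diffOp h f = D h f := by
  simp only [diffOp, D, LinearMap.sum_apply, LinearMap.smul_apply]
  refine Finset.sum_congr rfl fun e _ => ?_
  congr 1
  show _ = (P 0 ^ (e 0) * P 1 ^ (e 1)) f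
  rw [Module.End.mul_apply, Module.End.pow_apply, Module.End.pow_apply]
  rfl

lemma D_monomial (e : Fin 2 →₀ ℕ) (c : ℝ) : D (monomial e c) = c • W e := by
  rcases eq_or_ne c 0 with rfl | hc
  · simp [D]
  · rw [D, support_monomial, if_neg hc, Finset.sum_singleton, coeff_monomial, if_pos rfl]

lemma D_add (g h : R2) : D (g + h) = D g + D h := by
  show Finsupp.sum (AddMonoidAlgebra.coeff (g + h)) (fun e c => c • W e) =
    Finsupp.sum (AddMonoidAlgebra.coeff g) (fun e c => c • W e) +
      Finsupp.sum (AddMonoidAlgebra.coeff h) (fun e c => c • W e)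
  exact Finsupp.sum_add_index (fun e _ => zero_smul _ _) (fun e _ c c' => add_smul _ _ _)

lemma D_mul (g h : R2) : D (g * h) = D g * D h := by
  induction g using MvPolynomial.induction_on' with
  | add p q hp hq => rw [add_mul, D_add, D_add, hp, hq, add_mul]
  | monomial e c =>
    induction h using MvPolynomial.induction_on' with
    | add p q hp hq => rw [mul_add, D_add, D_add, hp, hq, mul_add]
    | monomial e' c' =>
      rw [monomial_mul, D_monomial, D_monomial, D_monomial, W_add, smul_mul_smul_comm]

lemma D_C (c : ℝ) : D (C c) = c • 1 := by
  rw [show (C c : R2) = monomial 0 c from rfl, D_monomial]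
  norm_num [W]

lemma D_smul (c : ℝ) (h : R2) : D (c • h) = c • D h := by
  rw [MvPolynomial.smul_eq_C_mul, D_mul, D_C, smul_mul_assoc, one_mul]

lemma D_X (i : Fin 2) : D (X i) = P i := by
  rw [show (X i : R2) = monomial (Finsupp.single i 1) 1 from rfl, D_monomial, one_smul, W]
  fin_cases i <;> simp

lemma D_lin_apply (u v : ℝ) (f : R2) :
    D (lin u v) f = u • pderiv 0 f + v • pderiv 1 f := by
  rw [lin, D_add, D_smul, D_smul, D_X, D_X]
  rfl

lemma pderiv_lin0 (u v : ℝ) : pderiv 0 (lin u v) = C u := by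
  simp [lin, MvPolynomial.smul_eq_C_mul]

lemma pderiv_lin1 (u v : ℝ) : pderiv 1 (lin u v) = C v := by
  simp [lin, MvPolynomial.smul_eq_C_mul]

lemma D_lin_pow (u v a' b' : ℝ) (m : ℕ) :
    D (lin u v) ((lin a' b') ^ m) = ((m : ℝ) * (a' * u + b' * v)) • (lin a' b') ^ (m - 1) := by
  rw [D_lin_apply, (pderiv 0).leibniz_pow, (pderiv 1).leibniz_pow, pderiv_lin0, pderiv_lin1,
    smul_eq_mul (α := R2), smul_eq_mul (α := R2), mul_comm _ (C a'), mul_comm _ (C b'),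
    MvPolynomial.C_mul', MvPolynomial.C_mul', ← Nat.cast_smul_eq_nsmul ℝ m,
    ← Nat.cast_smul_eq_nsmul ℝ m]
  match_scalars
  ring

lemma D_prod_dual {ι : Type} [DecidableEq ι] (t : Finset ι) (av bv : ι → ℝ) (a' b' : ℝ) (m : ℕ) :
    D (∏ k ∈ t, lin (bv k) (-(av k))) ((lin a' b') ^ m) =
      ((m.descFactorial t.card : ℝ) * ∏ k ∈ t, (a' * bv k - b' * av k)) •
        (lin a' b') ^ (m - t.card) := by
  induction t using Finset.induction_on with
  | empty => simp [D_C, ← MvPolynomial.C_1, -map_one]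
  | @insert k t hk ih =>
    rw [Finset.prod_insert hk, D_mul, Module.End.mul_apply, ih, map_smul, D_lin_pow,
      Finset.prod_insert hk, Finset.card_insert_of_notMem hk, Nat.descFactorial_succ,
      smul_smul, Nat.sub_sub]
    congr 1
    push_cast
    ring

lemma D_dual_self (u v : ℝ) (m : ℕ) : D (lin v (-u)) ((lin u v) ^ m) = 0 := by
  rw [D_lin_pow]
  simp [mul_comm]

lemma fin2_cases (i : Fin 2) : i = 0 ∨ i = 1 := by
  fin_cases i
  · exact Or.inl rfl
  · exact Or.inr rfl

lemma degree_fin2 (e : Fin 2 →₀ ℕ) : Finsupp.degree e = e 0 + e 1 := by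
  rw [Finsupp.degree, ← Fin.sum_univ_two (f := fun i => e i)]
  exact Finset.sum_subset (Finset.subset_univ _)
    (fun i _ hi => Finsupp.notMem_support_iff.mp hi)

lemma homog_coeff_deg {f : R2} {n : ℕ} (hf : f.IsHomogeneous n) {e : Fin 2 →₀ ℕ}
    (h : MvPolynomial.coeff e f ≠ 0) : e 0 + e 1 = n := by
  have := hf h
  rwa [← degree_fin2, Finsupp.degree_eq_weight_one]

lemma pderiv_isHomogeneous {f : R2} {n : ℕ} (hf : f.IsHomogeneous n) (i : Fin 2) :
    (pderiv i f).IsHomogeneous (n - 1) := by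
  conv_lhs => rw [f.as_sum]
  rw [map_sum]
  apply MvPolynomial.IsHomogeneous.sum
  intro e he
  rw [pderiv_monomial]
  rcases eq_or_ne (e i) 0 with h0 | h0
  · rw [h0]; norm_num; exact isHomogeneous_zero _ _ _
  · apply isHomogeneous_monomial
    have hdeg : e 0 + e 1 = n := homog_coeff_deg hf (MvPolynomial.mem_support_iff.mp he)
    rw [degree_fin2, ← hdeg]
    rw [Finsupp.tsub_apply, Finsupp.tsub_apply]
    rcases (fin2_cases i) with rfl | rfl <;> simp <;> omega

lemma homog_zero_pderiv {f : R2} (hf : f.IsHomogeneous 0) (i : Fin 2) :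
    pderiv i f = 0 := by
  conv_lhs => rw [f.as_sum]
  rw [map_sum]
  apply Finset.sum_eq_zero
  intro e he
  have hdeg : e 0 + e 1 = 0 := homog_coeff_deg hf (MvPolynomial.mem_support_iff.mp he)
  rw [pderiv_monomial]
  have : e i = 0 := by rcases (fin2_cases i) with rfl | rfl <;> omega
  rw [this]
  norm_num

lemma Ppow_isHomogeneous {f : R2} {n : ℕ} (hf : f.IsHomogeneous n) (i : Fin 2) (k : ℕ) :
    ((P i ^ k) f).IsHomogeneous (n - k) := by
  induction k generalizing n f with
  | zero => simpa using hf
  | succ k ih =>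
    rw [pow_succ, Module.End.mul_apply]
    have := ih (pderiv_isHomogeneous hf i)
    rwa [Nat.sub_sub, Nat.add_comm 1 k] at this

lemma Ppow_zero {f : R2} {n : ℕ} (hf : f.IsHomogeneous n) (i : Fin 2) {k : ℕ} (hk : n < k) :
    (P i ^ k) f = 0 := by
  induction k generalizing n f with
  | zero => omega
  | succ k ih =>
    rw [pow_succ, Module.End.mul_apply]
    rcases Nat.eq_zero_or_pos n with rfl | hn
    · rw [show P i f = 0 from homog_zero_pderiv hf i, map_zero]
    · exact ih (pderiv_isHomogeneous hf i) (by omega)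

lemma W_isHomogeneous {f : R2} {n : ℕ} (hf : f.IsHomogeneous n) (e : Fin 2 →₀ ℕ) :
    ((W e) f).IsHomogeneous (n - (e 0 + e 1)) := by
  rw [W, Module.End.mul_apply]
  have h1 := Ppow_isHomogeneous hf 1 (e 1)
  have := Ppow_isHomogeneous h1 0 (e 0)
  rwa [Nat.sub_sub, Nat.add_comm (e 1) (e 0)] at this

lemma W_zero {f : R2} {n : ℕ} (hf : f.IsHomogeneous n) (e : Fin 2 →₀ ℕ)
    (h : n < e 0 + e 1) : (W e) f = 0 := by
  rw [W, Module.End.mul_apply]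
  rcases lt_or_ge n (e 1) with h1 | h1
  · rw [Ppow_zero hf 1 h1, map_zero]
  · exact Ppow_zero (Ppow_isHomogeneous hf 1 (e 1)) 0 (by omega)

lemma D_isHomogeneous {p f : R2} {r n : ℕ} (hp : p.IsHomogeneous r) (hf : f.IsHomogeneous n) :
    ((D p) f).IsHomogeneous (n - r) := by
  rw [D, LinearMap.sum_apply]
  apply MvPolynomial.IsHomogeneous.sum
  intro e he
  rw [LinearMap.smul_apply]
  have hdeg : e 0 + e 1 = r := homog_coeff_deg hp (MvPolynomial.mem_support_iff.mp he)
  exact (homogeneousSubmodule (Fin 2) ℝ (n - r)).smul_mem _ (hdeg ▸ W_isHomogeneous hf e)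

lemma D_zero_of_lt {p f : R2} {r n : ℕ} (hp : p.IsHomogeneous r) (hf : f.IsHomogeneous n)
    (h : n < r) : (D p) f = 0 := by
  rw [D, LinearMap.sum_apply]
  apply Finset.sum_eq_zero
  intro e he
  rw [LinearMap.smul_apply]
  have hdeg : e 0 + e 1 = r := homog_coeff_deg hp (MvPolynomial.mem_support_iff.mp he)
  rw [W_zero hf e (by omega), smul_zero]

lemma finsupp2_ext {e e' : Fin 2 →₀ ℕ} (h0 : e 0 = e' 0) (h1 : e 1 = e' 1) : e = e' := by
  ext i
  rcases fin2_cases i with rfl | rfl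
  · exact h0
  · exact h1

def em (m : ℕ) (i : ℕ) : Fin 2 →₀ ℕ := Finsupp.single 0 i + Finsupp.single 1 (m - i)

lemma em_apply0 (m i : ℕ) : em m i 0 = i := by simp [em, Finsupp.single_apply]
lemma em_apply1 (m i : ℕ) : em m i 1 = m - i := by simp [em, Finsupp.single_apply]

lemma X_pow_mul_eq_monomial (i j : ℕ) :
    (X 0 ^ i * X 1 ^ j : R2) = monomial (Finsupp.single 0 i + Finsupp.single 1 j) 1 := by
  rw [X_pow_eq_monomial, X_pow_eq_monomial, monomial_mul, one_mul]

lemma lin_isHomogeneous (u v : ℝ) : (lin u v).IsHomogeneous 1 := by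
  apply MvPolynomial.IsHomogeneous.add <;>
  · rw [MvPolynomial.smul_eq_C_mul]
    simpa using (isHomogeneous_C (Fin 2) _).mul (isHomogeneous_X ℝ _)

lemma lin_pow_isHomogeneous (u v : ℝ) (m : ℕ) : ((lin u v) ^ m).IsHomogeneous m := by
  simpa using (lin_isHomogeneous u v).pow m

lemma lin_ne_zero {u v : ℝ} (h : (u, v) ≠ (0, 0)) : lin u v ≠ 0 := by
  intro hlin
  apply h
  have h0 := congrArg (MvPolynomial.coeff (Finsupp.single 0 1)) hlin
  have h1 := congrArg (MvPolynomial.coeff (Finsupp.single 1 1)) hlin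
  simp only [lin, coeff_add, coeff_smul, coeff_zero, X, coeff_monomial,
    Finsupp.single_eq_single_iff] at h0 h1
  norm_num at h0 h1
  simp [h0, h1]

lemma coeff_toForm (m : ℕ) (v : Fin (m+1) → ℝ) (i : Fin (m+1)) :
    MvPolynomial.coeff (em m i) (toForm m v) = v i := by
  rw [toForm, MvPolynomial.coeff_sum]
  simp only [coeff_smul, X_pow_mul_eq_monomial, coeff_monomial, em]
  rw [Finset.sum_eq_single i]
  · rw [if_pos rfl, smul_eq_mul, mul_one]
  · intro j _ hj
    rw [if_neg, smul_zero]
    intro hcontra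
    apply hj
    have := congrArg (fun e => e 0) hcontra
    simp only [Finsupp.add_apply, Finsupp.single_apply] at this
    norm_num at this
    exact Fin.ext this
  · intro h
    exact absurd (Finset.mem_univ i) h

lemma toForm_isHomogeneous (m : ℕ) (v : Fin (m+1) → ℝ) : (toForm m v).IsHomogeneous m := by
  apply MvPolynomial.IsHomogeneous.sum
  intro i _
  apply (homogeneousSubmodule (Fin 2) ℝ m).smul_mem
  rw [X_pow_mul_eq_monomial]
  apply isHomogeneous_monomial
  rw [degree_fin2, ← em, em_apply0, em_apply1]
  omega

lemma homog_decomp {f : R2} {m : ℕ} (hf : f.IsHomogeneous m) :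
    f = toForm m (fun i => MvPolynomial.coeff (em m (i : ℕ)) f) := by
  apply MvPolynomial.ext
  intro e
  rw [toForm, MvPolynomial.coeff_sum]
  simp only [coeff_smul, X_pow_mul_eq_monomial, coeff_monomial, em]
  rcases eq_or_ne (e 0 + e 1) m with hdeg | hdeg
  · have he0 : e 0 < m + 1 := by omega
    have heme : (Finsupp.single (0 : Fin 2) (e 0) + Finsupp.single 1 (m - e 0)) = e :=
      finsupp2_ext (by simp [Finsupp.single_apply]) (by simp [Finsupp.single_apply]; omega)
    rw [Finset.sum_eq_single (⟨e 0, he0⟩ : Fin (m+1))]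
    · rw [if_pos heme, smul_eq_mul, mul_one, heme]
    · intro j _ hj
      rw [if_neg, smul_zero]
      intro hcontra
      apply hj
      apply Fin.ext
      have h2 := congrArg (fun x => x 0) (hcontra.trans heme.symm)
      simp only [Finsupp.add_apply, Finsupp.single_apply] at h2
      norm_num at h2
      exact h2
    · intro h
      exact absurd (Finset.mem_univ _) h
  · have hL : MvPolynomial.coeff e f = 0 := by
      by_contra hc
      exact hdeg (homog_coeff_deg hf hc)
    rw [hL]
    symm
    apply Finset.sum_eq_zero
    intro j _
    rw [if_neg, smul_zero]
    intro hcontra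
    apply hdeg
    rw [← hcontra]
    simp only [Finsupp.add_apply, Finsupp.single_apply]
    norm_num
    omega

def toFormL (m : ℕ) : (Fin (m + 1) → ℝ) →ₗ[ℝ] R2 where
  toFun v := toForm m v
  map_add' v w := by simp [toForm, add_smul, Finset.sum_add_distrib]
  map_smul' c v := by simp [toForm, smul_smul, Finset.smul_sum]

def Phi (m : ℕ) : (Fin (m + 1) → ℝ) →ₗ[ℝ] homogeneousSubmodule (Fin 2) ℝ m :=
  LinearMap.codRestrict _ (toFormL m) (fun v => toForm_isHomogeneous m v)

lemma Phi_bijective (m : ℕ) : Function.Bijective (Phi m) := by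
  constructor
  · intro v w h
    funext i
    have h2 := congrArg (fun p : homogeneousSubmodule (Fin 2) ℝ m =>
      MvPolynomial.coeff (em m i) (p : R2)) h
    simpa [Phi, toFormL, LinearMap.codRestrict, coeff_toForm] using
      (show MvPolynomial.coeff (em m i) (toForm m v) = MvPolynomial.coeff (em m i) (toForm m w) from h2)
  · rintro ⟨f, hf⟩
    exact ⟨fun i => MvPolynomial.coeff (em m i) f,
      Subtype.ext (homog_decomp (mem_homogeneousSubmodule m f |>.mp hf)).symm⟩

def PhiEquiv (m : ℕ) : (Fin (m + 1) → ℝ) ≃ₗ[ℝ] homogeneousSubmodule (Fin 2) ℝ m :=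
  LinearEquiv.ofBijective (Phi m) (Phi_bijective m)

instance (m : ℕ) : FiniteDimensional ℝ (homogeneousSubmodule (Fin 2) ℝ m) :=
  Module.Finite.equiv (PhiEquiv m)

lemma finrank_homog (m : ℕ) :
    Module.finrank ℝ (homogeneousSubmodule (Fin 2) ℝ m) = m + 1 := by
  rw [← (PhiEquiv m).finrank_eq]
  simp

lemma D_lin_monomial (u v : ℝ) (s t : ℕ) :
    D (lin u v) ((X 0 : R2) ^ s * X 1 ^ t) =
      (u * s) • ((X 0 : R2) ^ (s - 1) * X 1 ^ t) + (v * t) • ((X 0 : R2) ^ s * X 1 ^ (t - 1)) := by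
  rw [D_lin_apply, X_pow_mul_eq_monomial, X_pow_mul_eq_monomial, X_pow_mul_eq_monomial,
    pderiv_monomial, pderiv_monomial]
  have h0 : ((Finsupp.single (0 : Fin 2) s + Finsupp.single 1 t) - Finsupp.single 0 1)
      = Finsupp.single (0 : Fin 2) (s - 1) + Finsupp.single 1 t := by
    apply finsupp2_ext <;> simp [Finsupp.single_apply]
  have h1 : ((Finsupp.single (0 : Fin 2) s + Finsupp.single 1 t) - Finsupp.single 1 1)
      = Finsupp.single (0 : Fin 2) s + Finsupp.single 1 (t - 1) := by
    apply finsupp2_ext <;> simp [Finsupp.single_apply]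
  rw [h0, h1, MvPolynomial.smul_monomial, MvPolynomial.smul_monomial]
  simp only [Finsupp.add_apply, Finsupp.single_apply]
  norm_num [mul_comm]
  simp [MvPolynomial.smul_monomial]

lemma monomial_mem_homog (s t : ℕ) : ((X 0 : R2) ^ s * X 1 ^ t) ∈
    homogeneousSubmodule (Fin 2) ℝ (s + t) := by
  rw [X_pow_mul_eq_monomial, mem_homogeneousSubmodule]
  apply isHomogeneous_monomial
  rw [degree_fin2]
  simp [Finsupp.single_apply]

lemma mem_image_of_u {u v : ℝ} (hu : u ≠ 0) (n : ℕ) :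
    ∀ k, k ≤ n → ((X 0 : R2) ^ (n - k) * X 1 ^ k) ∈
      Submodule.map (D (lin u v)) (homogeneousSubmodule (Fin 2) ℝ (n + 1)) := by
  intro k
  induction k with
  | zero =>
    intro _
    have hg : ((X 0 : R2) ^ (n + 1) * X 1 ^ 0) ∈ homogeneousSubmodule (Fin 2) ℝ (n + 1) := by
      simpa using monomial_mem_homog (n + 1) 0
    have hD := D_lin_monomial u v (n + 1) 0
    have hmem : (u * ((n + 1 : ℕ) : ℝ)) • ((X 0 : R2) ^ n * X 1 ^ 0) ∈
        Submodule.map (D (lin u v)) (homogeneousSubmodule (Fin 2) ℝ (n + 1)) := by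
      rw [show ((n + 1 : ℕ) - 1) = n by omega] at hD
      simp only [Nat.cast_zero, mul_zero, zero_smul, add_zero, zero_add] at hD
      rw [← hD]
      exact Submodule.mem_map_of_mem hg
    have := Submodule.smul_mem _ ((u * ((n + 1 : ℕ) : ℝ))⁻¹) hmem
    rw [smul_smul, inv_mul_cancel₀ (mul_ne_zero hu (Nat.cast_ne_zero.mpr (by omega))),
      one_smul] at this
    simpa using this
  | succ k ih =>
    intro hk1
    have hk : k ≤ n := by omega
    have hg : ((X 0 : R2) ^ (n - k) * X 1 ^ (k + 1)) ∈ homogeneousSubmodule (Fin 2) ℝ (n + 1) := by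
      have := monomial_mem_homog (n - k) (k + 1)
      rwa [show n - k + (k + 1) = n + 1 by omega] at this
    have hD := D_lin_monomial u v (n - k) (k + 1)
    have hmem : ((u * ((n - k : ℕ) : ℝ)) • ((X 0 : R2) ^ (n - k - 1) * X 1 ^ (k + 1)) +
        (v * ((k + 1 : ℕ) : ℝ)) • ((X 0 : R2) ^ (n - k) * X 1 ^ k)) ∈
        Submodule.map (D (lin u v)) (homogeneousSubmodule (Fin 2) ℝ (n + 1)) := by
      rw [show (k + 1 - 1) = k by omega] at hD
      rw [← hD]
      exact Submodule.mem_map_of_mem hg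
    have hsub := Submodule.sub_mem _ hmem
      (Submodule.smul_mem _ (v * ((k + 1 : ℕ) : ℝ)) (ih hk))
    rw [add_sub_cancel_right] at hsub
    have := Submodule.smul_mem _ ((u * ((n - k : ℕ) : ℝ))⁻¹) hsub
    rw [smul_smul, inv_mul_cancel₀ (mul_ne_zero hu (Nat.cast_ne_zero.mpr (by omega))),
      one_smul] at this
    rwa [show n - k - 1 = n - (k + 1) by omega] at this

lemma mem_image_of_v {u v : ℝ} (hv : v ≠ 0) (n : ℕ) :
    ∀ k, k ≤ n → ((X 0 : R2) ^ k * X 1 ^ (n - k)) ∈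
      Submodule.map (D (lin u v)) (homogeneousSubmodule (Fin 2) ℝ (n + 1)) := by
  intro k
  induction k with
  | zero =>
    intro _
    have hg : ((X 0 : R2) ^ 0 * X 1 ^ (n + 1)) ∈ homogeneousSubmodule (Fin 2) ℝ (n + 1) := by
      simpa using monomial_mem_homog 0 (n + 1)
    have hD := D_lin_monomial u v 0 (n + 1)
    have hmem : (v * ((n + 1 : ℕ) : ℝ)) • ((X 0 : R2) ^ 0 * X 1 ^ n) ∈
        Submodule.map (D (lin u v)) (homogeneousSubmodule (Fin 2) ℝ (n + 1)) := by
      rw [show ((n + 1 : ℕ) - 1) = n by omega] at hD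
      simp only [Nat.cast_zero, mul_zero, zero_smul, add_zero, zero_add] at hD
      rw [← hD]
      exact Submodule.mem_map_of_mem hg
    have := Submodule.smul_mem _ ((v * ((n + 1 : ℕ) : ℝ))⁻¹) hmem
    rw [smul_smul, inv_mul_cancel₀ (mul_ne_zero hv (Nat.cast_ne_zero.mpr (by omega))),
      one_smul] at this
    simpa using this
  | succ k ih =>
    intro hk1
    have hk : k ≤ n := by omega
    have hg : ((X 0 : R2) ^ (k + 1) * X 1 ^ (n - k)) ∈ homogeneousSubmodule (Fin 2) ℝ (n + 1) := by
      have := monomial_mem_homog (k + 1) (n - k)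
      rwa [show k + 1 + (n - k) = n + 1 by omega] at this
    have hD := D_lin_monomial u v (k + 1) (n - k)
    have hmem : ((u * ((k + 1 : ℕ) : ℝ)) • ((X 0 : R2) ^ k * X 1 ^ (n - k)) +
        (v * ((n - k : ℕ) : ℝ)) • ((X 0 : R2) ^ (k + 1) * X 1 ^ (n - k - 1))) ∈
        Submodule.map (D (lin u v)) (homogeneousSubmodule (Fin 2) ℝ (n + 1)) := by
      rw [show (k + 1 - 1) = k by omega] at hD
      rw [← hD]
      exact Submodule.mem_map_of_mem hg
    have hsub := Submodule.sub_mem _ hmem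
      (Submodule.smul_mem _ (u * ((k + 1 : ℕ) : ℝ)) (ih hk))
    rw [add_sub_cancel_left] at hsub
    have := Submodule.smul_mem _ ((v * ((n - k : ℕ) : ℝ))⁻¹) hsub
    rw [smul_smul, inv_mul_cancel₀ (mul_ne_zero hv (Nat.cast_ne_zero.mpr (by omega))),
      one_smul] at this
    rwa [show n - k - 1 = n - (k + 1) by omega] at this

lemma D_lin_surj {u v : ℝ} (huv : (u, v) ≠ (0, 0)) (n : ℕ) {f : R2}
    (hf : f.IsHomogeneous n) :
    ∃ g : R2, g.IsHomogeneous (n + 1) ∧ D (lin u v) g = f := by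
  have hmem : toForm n (fun i => MvPolynomial.coeff (em n (i : ℕ)) f) ∈
      Submodule.map (D (lin u v)) (homogeneousSubmodule (Fin 2) ℝ (n + 1)) := by
    rw [toForm]
    apply Submodule.sum_mem
    intro i _
    apply Submodule.smul_mem
    rcases eq_or_ne u 0 with rfl | hu
    · have hv : v ≠ 0 := fun hv => huv (by rw [hv])
      exact mem_image_of_v (u := 0) hv n (i : ℕ) (by omega)
    · have := mem_image_of_u (v := v) hu n (n - (i : ℕ)) (by omega)
      rwa [show (n - (n - (i : ℕ))) = (i : ℕ) by omega] at this
  rw [← homog_decomp hf] at hmem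
  obtain ⟨g, hg, hDg⟩ := hmem
  exact ⟨g, hg, hDg⟩

lemma D_one : D (1 : R2) = 1 := by
  rw [← MvPolynomial.C_1, D_C, one_smul]

lemma D_prod_surj {r : ℕ} (a b : Fin r → ℝ) (hnz : ∀ i, (a i, b i) ≠ (0, 0))
    (t : Finset (Fin r)) :
    ∀ (n : ℕ) (f : R2), f.IsHomogeneous n →
      ∃ g : R2, g.IsHomogeneous (n + t.card) ∧ D (∏ i ∈ t, lin (b i) (-(a i))) g = f := by
  induction t using Finset.induction_on with
  | empty =>
    intro n f hf
    exact ⟨f, by simpa using hf, by rw [Finset.prod_empty, D_one, Module.End.one_apply]⟩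
  | @insert k t hk ih =>
    intro n f hf
    have hba : ((b k, -(a k)) : ℝ × ℝ) ≠ (0, 0) := by
      intro hc
      apply hnz k
      rw [Prod.mk.injEq] at hc ⊢
      constructor
      · linarith [hc.2, neg_eq_zero.mp (by rw [hc.2])]
      · exact hc.1
    obtain ⟨h, hh, hDh⟩ := D_lin_surj hba n hf
    obtain ⟨g, hg, hDg⟩ := ih (n + 1) h hh
    refine ⟨g, ?_, ?_⟩
    · rwa [Finset.card_insert_of_notMem hk, show n + (t.card + 1) = n + 1 + t.card by omega]
    · rw [Finset.prod_insert hk, D_mul, Module.End.mul_apply, hDg, hDh]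

lemma indep_pows {r d : ℕ} (hd : 1 ≤ d) (a b : Fin r → ℝ)
    (hnz : ∀ i, (a i, b i) ≠ (0, 0))
    (hprop : ∀ i j, i ≠ j → a i * b j ≠ a j * b i) (hr : r ≤ d + 1) :
    LinearIndependent ℝ (fun i : Fin r => (lin (a i) (b i)) ^ d) := by
  rw [Fintype.linearIndependent_iff]
  intro g hg j
  have happ : D (∏ k ∈ Finset.univ.erase j, lin (b k) (-(a k)))
      (∑ i, g i • (lin (a i) (b i)) ^ d) = 0 := by rw [hg, map_zero]
  rw [map_sum] at happ
  rw [Finset.sum_eq_single j] at happ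
  rotate_left
  · intro i _ hij
    rw [map_smul, D_prod_dual, Finset.prod_eq_zero (Finset.mem_erase.mpr ⟨hij, Finset.mem_univ i⟩)
      (by ring), mul_zero, zero_smul, smul_zero]
  · intro h
    exact absurd (Finset.mem_univ j) h
  rw [map_smul, D_prod_dual] at happ
  have hcard : (Finset.univ.erase j).card = r - 1 := by
    rw [Finset.card_erase_of_mem (Finset.mem_univ j), Finset.card_univ, Fintype.card_fin]
  rw [hcard] at happ
  set c : ℝ := (d.descFactorial (r - 1) : ℝ) *
    ∏ k ∈ Finset.univ.erase j, (a j * b k - b j * a k) with hc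
  have hcne : c ≠ 0 := by
    apply mul_ne_zero
    · rw [Nat.cast_ne_zero, Ne, Nat.descFactorial_eq_zero_iff_lt]
      omega
    · rw [Finset.prod_ne_zero_iff]
      intro k hk
      have hkj : k ≠ j := (Finset.mem_erase.mp hk).1
      have := hprop j k (Ne.symm hkj)
      intro hzero
      apply this
      have : a j * b k = b j * a k := by linarith [sub_eq_zero.mp hzero]
      linarith [this, mul_comm (b j) (a k)]
  have hlne : (lin (a j) (b j)) ^ (d - (r - 1)) ≠ 0 :=
    pow_ne_zero _ (lin_ne_zero (hnz j))
  rw [smul_smul, smul_eq_zero] at happ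
  rcases happ with h | h
  · rcases mul_eq_zero.mp h with h' | h'
    · exact h'
    · exact absurd h' hcne
  · exact absurd h hlne

theorem main_iff (d r : ℕ) (hd : 1 ≤ d) (f : MvPolynomial (Fin 2) ℝ)
    (hf : f.IsHomogeneous d)
    (a b : Fin r → ℝ) (hnz : ∀ i, (a i, b i) ≠ (0, 0))
    (hprop : ∀ i j, i ≠ j → a i * b j ≠ a j * b i) :
    (∃ c : Fin r → ℝ, f = ∑ i, c i • (lin (a i) (b i)) ^ d) ↔
      diffOp (∏ i, lin (b i) (-(a i))) f = 0 := by
  have hp : (∏ i, lin (b i) (-(a i))).IsHomogeneous r := by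
    have := MvPolynomial.IsHomogeneous.prod Finset.univ
      (fun i => lin (b i) (-(a i))) (fun _ => 1) (fun i _ => lin_isHomogeneous _ _)
    simpa using this
  have hDzero : ∀ i : Fin r, D (∏ k, lin (b k) (-(a k))) ((lin (a i) (b i)) ^ d) = 0 := by
    intro i
    rw [← Finset.prod_erase_mul _ _ (Finset.mem_univ i), D_mul, Module.End.mul_apply,
      D_dual_self, map_zero]
  rw [diffOp_eq]
  constructor
  · rintro ⟨c, rfl⟩
    rw [map_sum]
    apply Finset.sum_eq_zero
    intro i _
    rw [map_smul, hDzero i, smul_zero]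
  · intro h0
    rcases le_or_gt r d with hr | hr
    · set H := homogeneousSubmodule (Fin 2) ℝ d with hH
      set T : H →ₗ[ℝ] homogeneousSubmodule (Fin 2) ℝ (d - r) :=
        LinearMap.codRestrict _ ((D (∏ i, lin (b i) (-(a i)))) ∘ₗ (Submodule.subtype H))
          (fun x => D_isHomogeneous hp x.2) with hT
      have hsurj : Function.Surjective T := by
        rintro ⟨fy, hfy⟩
        obtain ⟨g, hg, hDg⟩ := D_prod_surj a b hnz Finset.univ (d - r) fy hfy
        rw [Finset.card_univ, Fintype.card_fin, show d - r + r = d by omega] at hg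
        exact ⟨⟨g, hg⟩, Subtype.ext hDg⟩
      have hrk := LinearMap.finrank_range_add_finrank_ker T
      rw [LinearMap.range_eq_top.mpr hsurj, finrank_top] at hrk
      have hker : Module.finrank ℝ (LinearMap.ker T) = r := by
        have h1 := finrank_homog d
        have h2 := finrank_homog (d - r)
        rw [h2] at hrk
        have h1' : Module.finrank ℝ H = d + 1 := h1
        omega
      set v : Fin r → H := fun i => ⟨(lin (a i) (b i)) ^ d, lin_pow_isHomogeneous _ _ d⟩ with hv
      have hvker : ∀ i, v i ∈ LinearMap.ker T := by
        intro i
        rw [LinearMap.mem_ker]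
        exact Subtype.ext (hDzero i)
      have hli : LinearIndependent ℝ v := by
        apply LinearIndependent.of_comp (Submodule.subtype H)
        exact indep_pows hd a b hnz hprop (by omega)
      have hsple : Submodule.span ℝ (Set.range v) ≤ LinearMap.ker T := by
        rw [Submodule.span_le]
        rintro x ⟨i, rfl⟩
        exact hvker i
      have hspfr : Module.finrank ℝ (Submodule.span ℝ (Set.range v)) = r := by
        rw [finrank_span_eq_card hli, Fintype.card_fin]
      have hspeq : Submodule.span ℝ (Set.range v) = LinearMap.ker T :=
        Submodule.eq_of_le_of_finrank_le hsple (by rw [hspfr, hker])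
      have hfker : (⟨f, hf⟩ : H) ∈ LinearMap.ker T := by
        rw [LinearMap.mem_ker]
        exact Subtype.ext h0
      rw [← hspeq] at hfker
      obtain ⟨c, hc⟩ := (Submodule.mem_span_range_iff_exists_fun ℝ).mp hfker
      refine ⟨c, ?_⟩
      have hval := congrArg (Subtype.val) hc
      simpa using hval.symm
    · have hdr : d + 1 ≤ r := hr
      set emb := Fin.castLEEmb hdr with hemb
      have hli : LinearIndependent ℝ
          (fun i : Fin (d+1) => (lin (a (emb i)) (b (emb i))) ^ d) :=
        indep_pows hd (fun i => a (emb i)) (fun i => b (emb i)) (fun i => hnz _)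
          (fun i j hij => hprop _ _ (fun hc => hij (emb.injective hc))) (le_refl _)
      set v : Fin (d+1) → homogeneousSubmodule (Fin 2) ℝ d :=
        fun i => ⟨(lin (a (emb i)) (b (emb i))) ^ d, lin_pow_isHomogeneous _ _ d⟩ with hv
      have hliv : LinearIndependent ℝ v := by
        apply LinearIndependent.of_comp (Submodule.subtype _)
        exact hli
      have hspeq : Submodule.span ℝ (Set.range v) = ⊤ := by
        apply Submodule.eq_top_of_finrank_eq
        rw [finrank_span_eq_card hliv, Fintype.card_fin, finrank_homog]
      have hfmem : (⟨f, hf⟩ : homogeneousSubmodule (Fin 2) ℝ d) ∈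
          Submodule.span ℝ (Set.range v) := by
        rw [hspeq]
        trivial
      obtain ⟨c', hc'⟩ := (Submodule.mem_span_range_iff_exists_fun ℝ).mp hfmem
      have hval := congrArg (Subtype.val) hc'
      set c : Fin r → ℝ := fun j => if h : (j : ℕ) < d + 1 then c' ⟨(j : ℕ), h⟩ else 0 with hcdef
      refine ⟨c, ?_⟩
      have hzero : ∀ j ∈ (Finset.univ : Finset (Fin r)), j ∉ Finset.univ.map emb →
          c j • (lin (a j) (b j)) ^ d = 0 := by
        intro j _ hj
        have hnl : ¬ (j : ℕ) < d + 1 := by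
          intro hlt
          apply hj
          rw [Finset.mem_map]
          refine ⟨⟨(j : ℕ), hlt⟩, Finset.mem_univ _, ?_⟩
          rw [hemb]
          exact Fin.ext rfl
        rw [hcdef]
        simp only [dif_neg hnl, zero_smul]
      rw [← Finset.sum_subset (Finset.subset_univ _) hzero, Finset.sum_map]
      have hterm : ∀ i : Fin (d+1), c (emb i) • (lin (a (emb i)) (b (emb i))) ^ d
          = c' i • ((v i : R2)) := by
        intro i
        congr 1
        rw [hcdef]
        have hlt : ((emb i : Fin r) : ℕ) < d + 1 := by
          rw [hemb]
          simp [Fin.is_le]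
        simp only [dif_pos hlt]
        congr 1
      rw [Finset.sum_congr rfl (fun i _ => hterm i)]
      simpa using hval.symm

end ApolarAux
end

/-- Apolarity Lemma for binary forms: f = Σ cᵢ (aᵢx+bᵢy)^d with pairwise
non-proportional linear forms iff p = Π (bᵢx - aᵢy) annihilates f. -/
theorem stmt_0 (d r : ℕ) (hd : 1 ≤ d) (f : MvPolynomial (Fin 2) ℝ)
    (hf : f.IsHomogeneous d)
    (a b : Fin r → ℝ) (hnz : ∀ i, (a i, b i) ≠ (0, 0))
    (hprop : ∀ i j, i ≠ j → a i * b j ≠ a j * b i) :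
    (∃ c : Fin r → ℝ, f = ∑ i, c i • (lin (a i) (b i)) ^ d) ↔
      diffOp (∏ i, lin (b i) (-(a i))) f = 0 :=
  ApolarAux.main_iff d r hd f hf a b hnz hprop
end

section
/- Every real binary form f of degree d ≥ 1 has real Waring rank at most d: there exist real numbers c_1,…,c_d and real linear forms ℓ_1,…,ℓ_d such that f = Σ_{i=1}^d c_i ℓ_i^d. -/
section WaringAux

open Polynomial in
noncomputable def Lam (d : ℕ) (h : ℕ → ℝ) (p : ℝ[X]) : ℝ :=
  ∑ k ∈ Finset.range (d+1), h k * p.coeff k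

open Polynomial

lemma Lam_sub (d : ℕ) (h : ℕ → ℝ) (p q : ℝ[X]) :
    Lam d h (p - q) = Lam d h p - Lam d h q := by
  simp [Lam, mul_sub, Finset.sum_sub_distrib]

lemma Lam_C_mul (d : ℕ) (h : ℕ → ℝ) (t : ℝ) (p : ℝ[X]) :
    Lam d h (C t * p) = t * Lam d h p := by
  rw [Lam, Lam, Finset.mul_sum]
  exact Finset.sum_congr rfl fun k _ => by rw [coeff_C_mul]; ring

lemma Lam_linfac (d : ℕ) (h : ℕ → ℝ) (t : ℝ) (p : ℝ[X]) :
    Lam d h ((X - C t) * p) = Lam d h (X * p) - t * Lam d h p := by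
  rw [sub_mul, Lam_sub, Lam_C_mul]

lemma Lam_X_pow (d : ℕ) (h : ℕ → ℝ) {k : ℕ} (hk : k ≤ d) :
    Lam d h (X ^ k) = h k := by
  rw [Lam, Finset.sum_eq_single k]
  · simp
  · intro b _ hb; simp [coeff_X_pow, hb, Ne.symm hb]
  · intro hk'; exact absurd (Finset.mem_range.2 (Nat.lt_succ_of_le hk)) hk'

/-- Downward induction: if Λ kills all products ∏_{j∈s}(X - r j), it kills X^k for k ≤ #s. -/
lemma Lam_vanish {n : ℕ} (d : ℕ) (h : ℕ → ℝ) (s : Finset (Fin n))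
    (hs : ∀ r : Fin n → ℝ, Lam d h (∏ j ∈ s, (X - C (r j))) = 0) :
    ∀ k ≤ s.card, Lam d h (X ^ k) = 0 := by
  induction s using Finset.induction_on with
  | empty =>
    intro k hk
    simp only [Finset.card_empty, Nat.le_zero] at hk
    subst hk
    simpa using hs (fun _ => 0)
  | @insert j s hj ih =>
    -- first: Λ kills all products over s, and all X * products over s
    have key : ∀ r : Fin n → ℝ, Lam d h (X * ∏ i ∈ s, (X - C (r i))) = 0
        ∧ Lam d h (∏ i ∈ s, (X - C (r i))) = 0 := by
      intro r
      have h2 : ∀ t : ℝ, Lam d h (X * ∏ i ∈ s, (X - C (r i)))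
          - t * Lam d h (∏ i ∈ s, (X - C (r i))) = 0 := by
        intro t
        have := hs (Function.update r j t)
        rw [Finset.prod_insert hj] at this
        have hprod : ∏ i ∈ s, (X - C (Function.update r j t i)) = ∏ i ∈ s, (X - C (r i)) := by
          apply Finset.prod_congr rfl
          intro i hi
          rw [Function.update_of_ne (by rintro rfl; exact hj hi)]
        rw [hprod, Function.update_self, Lam_linfac] at this
        exact this
      have h0 := h2 0
      have h1 := h2 1
      constructor
      · simpa using h0
      · nlinarith [h0, h1]
    intro k hk
    rw [Finset.card_insert_of_notMem hj] at hk
    rcases Nat.lt_or_ge k (s.card + 1) with hlt | hge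
    · exact ih (fun r => (key r).2) k (Nat.lt_succ_iff.1 hlt)
    · have hk' : k = s.card + 1 := le_antisymm hk hge
      subst hk'
      have := (key (fun _ => 0)).1
      simpa [pow_succ, mul_comm] using this

noncomputable def Qmv (n : ℕ) (s : Finset (Fin n)) : Polynomial (MvPolynomial (Fin n) ℝ) :=
  ∏ j ∈ s, (X - C (MvPolynomial.X j))

noncomputable def Gm (n d : ℕ) (h : ℕ → ℝ) (p : Polynomial (MvPolynomial (Fin n) ℝ)) :
    MvPolynomial (Fin n) ℝ :=
  ∑ k ∈ Finset.range (d+1), h k • p.coeff k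

lemma eval_Gm (n d : ℕ) (h : ℕ → ℝ) (p : Polynomial (MvPolynomial (Fin n) ℝ))
    (r : Fin n → ℝ) :
    MvPolynomial.eval r (Gm n d h p) = Lam d h (p.map (MvPolynomial.eval r)) := by
  rw [Gm, Lam, map_sum]
  exact Finset.sum_congr rfl fun k _ => by
    rw [MvPolynomial.smul_eq_C_mul, map_mul, MvPolynomial.eval_C, Polynomial.coeff_map]

lemma map_Qmv (n : ℕ) (s : Finset (Fin n)) (r : Fin n → ℝ) :
    (Qmv n s).map (MvPolynomial.eval r) = ∏ j ∈ s, (X - C (r j)) := by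
  rw [Qmv, Polynomial.map_prod]
  exact Finset.prod_congr rfl fun j _ => by
    rw [Polynomial.map_sub, Polynomial.map_X, Polynomial.map_C, MvPolynomial.eval_X]

lemma eval_Gm_Qmv (n d : ℕ) (h : ℕ → ℝ) (s : Finset (Fin n)) (r : Fin n → ℝ) :
    MvPolynomial.eval r (Gm n d h (Qmv n s)) = Lam d h (∏ j ∈ s, (X - C (r j))) := by
  rw [eval_Gm, map_Qmv]

lemma eval_Gm_X_mul_Qmv (n d : ℕ) (h : ℕ → ℝ) (s : Finset (Fin n)) (r : Fin n → ℝ) :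
    MvPolynomial.eval r (Gm n d h (X * Qmv n s)) = Lam d h (X * ∏ j ∈ s, (X - C (r j))) := by
  rw [eval_Gm, Polynomial.map_mul, Polynomial.map_X, map_Qmv]

lemma Gm_linfac (n d : ℕ) (h : ℕ → ℝ) (m : MvPolynomial (Fin n) ℝ)
    (p : Polynomial (MvPolynomial (Fin n) ℝ)) :
    Gm n d h ((X - C m) * p) = Gm n d h (X * p) - m * Gm n d h p := by
  rw [Gm, Gm, Gm, Finset.mul_sum, ← Finset.sum_sub_distrib]
  exact Finset.sum_congr rfl fun k _ => by
    rw [sub_mul, coeff_sub, coeff_C_mul, smul_sub, mul_smul_comm]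

lemma A_ne_zero {d : ℕ} (z : Fin d) (h : ℕ → ℝ) (hh : ∃ k < d, h k ≠ 0) :
    Gm d d h (Qmv d (Finset.univ.erase z)) ≠ 0 := by
  intro hA
  obtain ⟨k, hk, hk0⟩ := hh
  have hvan : ∀ r : Fin d → ℝ, Lam d h (∏ j ∈ Finset.univ.erase z, (X - C (r j))) = 0 := by
    intro r
    rw [← eval_Gm_Qmv, hA, map_zero]
  have hcard : (Finset.univ.erase z).card = d - 1 := by
    rw [Finset.card_erase_of_mem (Finset.mem_univ _), Finset.card_univ, Fintype.card_fin]
  have hd : 1 ≤ d := z.pos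
  have := Lam_vanish d h _ hvan k (by rw [hcard]; omega)
  rw [Lam_X_pow d h (le_of_lt hk)] at this
  exact hk0 this

lemma rename_Gm_univ (d : ℕ) (h : ℕ → ℝ) (σ : Equiv.Perm (Fin d)) :
    MvPolynomial.rename σ (Gm d d h (Qmv d Finset.univ)) = Gm d d h (Qmv d Finset.univ) := by
  have hq : (Qmv d Finset.univ).map
      (MvPolynomial.rename (σ : Fin d → Fin d) : MvPolynomial (Fin d) ℝ →ₐ[ℝ] MvPolynomial (Fin d) ℝ).toRingHom =
      Qmv d Finset.univ := by
    rw [Qmv, Polynomial.map_prod]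
    have heach : ∀ j : Fin d, ((X - C (MvPolynomial.X j) : Polynomial (MvPolynomial (Fin d) ℝ))).map
        (MvPolynomial.rename (σ : Fin d → Fin d) : MvPolynomial (Fin d) ℝ →ₐ[ℝ] MvPolynomial (Fin d) ℝ).toRingHom
        = X - C (MvPolynomial.X (σ j)) := by
      intro j
      rw [Polynomial.map_sub, Polynomial.map_X, Polynomial.map_C]
      simp [MvPolynomial.rename_X]
    rw [Finset.prod_congr rfl (fun j _ => heach j)]
    exact Equiv.prod_comp σ (fun j => (X - C (MvPolynomial.X j)))
  simp only [Gm, map_sum]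
  refine Finset.sum_congr rfl fun k _ => ?_
  conv_rhs => rw [← hq]
  rw [Polynomial.coeff_map, MvPolynomial.smul_eq_C_mul, MvPolynomial.smul_eq_C_mul, map_mul,
    MvPolynomial.rename_C]
  rfl

theorem core {d : ℕ} (z : Fin d) (h : ℕ → ℝ) (hh : ∃ k < d, h k ≠ 0) :
    ∃ r : Fin d → ℝ, Function.Injective r ∧ Lam d h (∏ j, (X - C (r j))) = 0 := by
  by_contra hcon
  push_neg at hcon
  classical
  set s₀ : Finset (Fin d) := Finset.univ.erase z with hs₀
  have hzs₀ : z ∉ s₀ := Finset.notMem_erase _ _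
  set A : MvPolynomial (Fin d) ℝ := Gm d d h (Qmv d s₀) with hAdef
  set B : MvPolynomial (Fin d) ℝ := Gm d d h (X * Qmv d s₀) with hBdef
  have hA : A ≠ 0 := A_ne_zero z h hh
  set V : MvPolynomial (Fin d) ℝ :=
    ∏ i ∈ s₀, ∏ j ∈ s₀.filter (· < i), (MvPolynomial.X i - MvPolynomial.X j) with hVdef
  have hV : V ≠ 0 := by
    intro h0
    have := congrArg (MvPolynomial.eval (fun i : Fin d => (i.val : ℝ))) h0
    rw [hVdef, map_prod, map_zero, Finset.prod_eq_zero_iff] at this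
    obtain ⟨i, _, hi⟩ := this
    rw [map_prod, Finset.prod_eq_zero_iff] at hi
    obtain ⟨j, hj, hij⟩ := hi
    have hlt : j < i := (Finset.mem_filter.1 hj).2
    have h1 : (i.val : ℝ) - (j.val : ℝ) = 0 := by simpa using hij
    have h2 : (j.val : ℝ) < (i.val : ℝ) := by exact_mod_cast hlt
    linarith
  set P : MvPolynomial (Fin d) ℝ := ∏ j ∈ s₀, (B - MvPolynomial.X j * A) with hPdef
  have huniv : (Finset.univ : Finset (Fin d)) = insert z s₀ := by
    rw [hs₀, Finset.insert_erase (Finset.mem_univ z)]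
  have key : ∀ r : Fin d → ℝ, MvPolynomial.eval r (P * V * A) = 0 := by
    intro r
    rw [map_mul, map_mul]
    by_cases hVr : MvPolynomial.eval r V = 0
    · rw [hVr]; ring
    by_cases hAr : MvPolynomial.eval r A = 0
    · rw [hAr]; ring
    have hfac : ∀ i ∈ s₀, ∀ j ∈ s₀, j < i → r i ≠ r j := by
      intro i hi j hj hlt h0
      apply hVr
      rw [hVdef, map_prod]
      refine Finset.prod_eq_zero hi ?_
      rw [map_prod]
      refine Finset.prod_eq_zero (Finset.mem_filter.2 ⟨hj, hlt⟩) ?_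
      rw [map_sub, MvPolynomial.eval_X, MvPolynomial.eval_X, h0, sub_self]
    have hinj : ∀ i ∈ s₀, ∀ j ∈ s₀, i ≠ j → r i ≠ r j := by
      intro i hi j hj hij
      rcases lt_or_gt_of_ne hij with hlt | hlt
      · exact fun hc => hfac j hj i hi hlt hc.symm
      · exact hfac i hi j hj hlt
    set t : ℝ := MvPolynomial.eval r B / MvPolynomial.eval r A with htdef
    set r' : Fin d → ℝ := Function.update r z t with hr'def
    have hprodeq : ∏ j ∈ s₀, (X - C (r' j)) = ∏ j ∈ s₀, (X - C (r j)) :=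
      Finset.prod_congr rfl fun j hj => by
        rw [hr'def, Function.update_of_ne (by rintro rfl; exact hzs₀ hj)]
    have hFr' : Lam d h (∏ j, (X - C (r' j))) = 0 := by
      rw [huniv, Finset.prod_insert hzs₀, hprodeq]
      have hrz : r' z = t := Function.update_self z t r
      rw [hrz, Lam_linfac]
      have e1 : Lam d h (X * ∏ j ∈ s₀, (X - C (r j))) = MvPolynomial.eval r B :=
        (eval_Gm_X_mul_Qmv d d h s₀ r).symm
      have e2 : Lam d h (∏ j ∈ s₀, (X - C (r j))) = MvPolynomial.eval r A :=
        (eval_Gm_Qmv d d h s₀ r).symm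
      rw [e1, e2, htdef]
      field_simp
      ring
    have hnotinj : ¬ Function.Injective r' := fun hI => hcon r' hI hFr'
    rw [Function.not_injective_iff] at hnotinj
    obtain ⟨i1, i2, heq, hne⟩ := hnotinj
    have hj' : ∃ j ∈ s₀, t = r j := by
      by_cases h1 : i1 = z
      · subst h1
        have hi2 : i2 ∈ s₀ := Finset.mem_erase.2 ⟨fun hc => hne hc.symm, Finset.mem_univ _⟩
        refine ⟨i2, hi2, ?_⟩
        have := heq
        rwa [hr'def, Function.update_self, Function.update_of_ne (fun hc => hne hc.symm)] at this
      · by_cases h2 : i2 = z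
        · subst h2
          have hi1 : i1 ∈ s₀ := Finset.mem_erase.2 ⟨h1, Finset.mem_univ _⟩
          refine ⟨i1, hi1, ?_⟩
          have := heq.symm
          rwa [hr'def, Function.update_self, Function.update_of_ne h1] at this
        · exfalso
          have hi1 : i1 ∈ s₀ := Finset.mem_erase.2 ⟨h1, Finset.mem_univ _⟩
          have hi2 : i2 ∈ s₀ := Finset.mem_erase.2 ⟨h2, Finset.mem_univ _⟩
          apply hinj i1 hi1 i2 hi2 hne
          have := heq
          rwa [hr'def, Function.update_of_ne h1, Function.update_of_ne h2] at this
    obtain ⟨j, hjs, hjt⟩ := hj'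
    have hfac0 : MvPolynomial.eval r (B - MvPolynomial.X j * A) = 0 := by
      rw [map_sub, map_mul, MvPolynomial.eval_X, ← hjt, htdef]
      field_simp
      ring
    have hPr : MvPolynomial.eval r P = 0 := by
      rw [hPdef, map_prod]
      exact Finset.prod_eq_zero hjs hfac0
    rw [hPr]; ring
  have hPVA : P * V * A = 0 :=
    MvPolynomial.funext (fun x => by rw [key x, map_zero])
  have hP : P = 0 := by
    rcases mul_eq_zero.1 hPVA with hPV | hA0
    · exact (mul_eq_zero.1 hPV).resolve_right hV
    · exact absurd hA0 hA
  obtain ⟨j, hjs, hfac0⟩ := Finset.prod_eq_zero_iff.1 (hPdef ▸ hP)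
  have hBj : B = MvPolynomial.X j * A := sub_eq_zero.1 hfac0
  have hjz : j ≠ z := (Finset.mem_erase.1 hjs).1
  have hFdecomp : Gm d d h (Qmv d Finset.univ)
      = (MvPolynomial.X j - MvPolynomial.X z) * A := by
    have hq : Qmv d Finset.univ = (X - C (MvPolynomial.X z)) * Qmv d s₀ := by
      rw [Qmv, Qmv, huniv, Finset.prod_insert hzs₀]
    rw [hq, Gm_linfac, ← hBdef, ← hAdef, hBj]
    ring
  set σ : Equiv.Perm (Fin d) := Equiv.swap z j with hσdef
  have hsym := rename_Gm_univ d h σ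
  rw [hFdecomp, map_mul, map_sub, MvPolynomial.rename_X, MvPolynomial.rename_X] at hsym
  have hσj : σ j = z := Equiv.swap_apply_right z j
  have hσz : σ z = j := Equiv.swap_apply_left z j
  rw [hσj, hσz] at hsym
  have hXjz : (MvPolynomial.X j - MvPolynomial.X z : MvPolynomial (Fin d) ℝ) ≠ 0 :=
    sub_ne_zero.2 (fun hc => hjz (MvPolynomial.X_injective hc))
  have hAneg : MvPolynomial.rename σ A = -A := by
    have hzero : (MvPolynomial.X j - MvPolynomial.X z)
        * (A + MvPolynomial.rename σ A) = 0 := by linear_combination -hsym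
    have h0 := (mul_eq_zero.1 hzero).resolve_left hXjz
    exact eq_neg_of_add_eq_zero_right h0
  apply hA
  apply MvPolynomial.funext (q := 0)
  intro r0
  rw [map_zero]
  set r : Fin d → ℝ := Function.update r0 z (r0 j) with hrdef
  have e0 : MvPolynomial.eval r A = MvPolynomial.eval r0 A := by
    rw [hAdef, eval_Gm_Qmv, eval_Gm_Qmv]
    congr 1
    refine Finset.prod_congr rfl fun i hi => ?_
    rw [hrdef, Function.update_of_ne (by rintro rfl; exact hzs₀ hi)]
  have hrσ : r ∘ σ = r := by
    funext i
    show r (σ i) = r i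
    by_cases h1 : i = z
    · rw [h1, hσz, hrdef, Function.update_of_ne hjz, Function.update_self]
    · by_cases h2 : i = j
      · rw [h2, hσj, hrdef, Function.update_self, Function.update_of_ne hjz]
      · rw [hσdef, Equiv.swap_apply_of_ne_of_ne h1 h2]
  have e2 : MvPolynomial.eval r (MvPolynomial.rename σ A) = MvPolynomial.eval r A := by
    rw [MvPolynomial.eval_rename, hrσ]
  have e3 : MvPolynomial.eval r (MvPolynomial.rename σ A) = - MvPolynomial.eval r A := by
    rw [hAneg, map_neg]
  have e4 : MvPolynomial.eval r A = 0 := by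
    have := e2.symm.trans e3
    linarith
  rw [← e0, e4]

lemma Lam_sum (d : ℕ) (h : ℕ → ℝ) {ι : Type*} (s : Finset ι) (p : ι → ℝ[X]) :
    Lam d h (∑ i ∈ s, p i) = ∑ i ∈ s, Lam d h (p i) := by
  simp only [Lam, Polynomial.finset_sum_coeff, Finset.mul_sum]
  exact Finset.sum_comm

theorem moments {d : ℕ} (hd : 1 ≤ d) (h : ℕ → ℝ) (r : Fin d → ℝ) (hr : Function.Injective r)
    (hF : Lam d h (∏ j, (X - C (r j))) = 0) :
    ∃ c : Fin d → ℝ, ∀ k ≤ d, ∑ j, c j * (r j) ^ k = h k := by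
  classical
  set c : Fin d → ℝ := fun j => Lam d h (Lagrange.basis Finset.univ r j) with hcdef
  have hcard : (Finset.univ : Finset (Fin d)).card = d := by
    rw [Finset.card_univ, Fintype.card_fin]
  have stepA : ∀ k < d, ∑ j, c j * (r j) ^ k = h k := by
    intro k hk
    have hdeg : (X ^ k : ℝ[X]).degree < (Finset.univ : Finset (Fin d)).card := by
      rw [Polynomial.degree_X_pow, hcard]
      exact_mod_cast hk
    have hint := Lagrange.eq_interpolate (f := (X ^ k : ℝ[X]))
      (fun x _ y _ hxy => hr hxy) hdeg
    have hint2 : (X ^ k : ℝ[X])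
        = ∑ i, C ((r i) ^ k) * Lagrange.basis Finset.univ r i := by
      conv_lhs => rw [hint]
      simp only [Polynomial.eval_pow, Polynomial.eval_X]
      rfl
    have hlam := congrArg (Lam d h) hint2
    rw [Lam_X_pow d h (le_of_lt hk), Lam_sum] at hlam
    rw [hlam]
    exact Finset.sum_congr rfl fun j _ => by rw [Lam_C_mul]; ring
  refine ⟨c, fun k hk => ?_⟩
  rcases Nat.lt_or_ge k d with hlt | hge
  · exact stepA k hlt
  have hkd : k = d := le_antisymm hk hge
  rw [hkd]
  set p : ℝ[X] := ∏ j, (X - C (r j)) with hpdef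
  have hpmonic : p.Monic := Polynomial.monic_prod_of_monic _ _ fun j _ => Polynomial.monic_X_sub_C _
  have hpdeg : p.natDegree = d := by
    rw [hpdef, Polynomial.natDegree_prod _ _ (fun j _ => Polynomial.X_sub_C_ne_zero _)]
    simp [hcard]
  set q : ℝ[X] := X ^ d - p with hqdef
  have hqdeg : q.degree < (d : ℕ) := by
    rw [Polynomial.degree_lt_iff_coeff_zero]
    intro m hm
    rcases Nat.eq_or_lt_of_le hm with hm' | hm'
    · subst hm'
      rw [hqdef, Polynomial.coeff_sub, Polynomial.coeff_X_pow, if_pos rfl]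
      have h1 : p.coeff d = 1 := by
        conv_lhs => rw [← hpdeg]
        exact hpmonic.coeff_natDegree
      rw [h1, sub_self]
    · rw [hqdef, Polynomial.coeff_sub, Polynomial.coeff_X_pow,
        if_neg (by omega), Polynomial.coeff_eq_zero_of_natDegree_lt (by omega), sub_self]
  have hqnat : q.natDegree < d := by
    rcases eq_or_ne q 0 with h0 | h0
    · rw [h0]; simpa using (show 0 < d from hd)
    · exact (Polynomial.natDegree_lt_iff_degree_lt h0).2 hqdeg
  have hcoeffd : q.coeff d = 0 := (Polynomial.degree_lt_iff_coeff_zero q d).1 hqdeg d le_rfl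
  have hevalq : ∀ j, Polynomial.eval (r j) q = (r j) ^ d := by
    intro j
    have hpj : Polynomial.eval (r j) p = 0 := by
      rw [hpdef, Polynomial.eval_prod]
      refine Finset.prod_eq_zero (Finset.mem_univ j) ?_
      simp
    rw [hqdef, Polynomial.eval_sub, Polynomial.eval_pow, Polynomial.eval_X, hpj, sub_zero]
  have hLq : Lam d h q = h d := by
    rw [hqdef, Lam_sub, Lam_X_pow d h le_rfl, hF, sub_zero]
  calc ∑ j, c j * (r j) ^ d = ∑ j, c j * Polynomial.eval (r j) q :=
        Finset.sum_congr rfl fun j _ => by rw [hevalq]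
    _ = ∑ j, c j * ∑ m ∈ Finset.range d, q.coeff m * (r j) ^ m :=
        Finset.sum_congr rfl fun j _ => by rw [Polynomial.eval_eq_sum_range' hqnat]
    _ = ∑ m ∈ Finset.range d, q.coeff m * ∑ j, c j * (r j) ^ m := by
        simp only [Finset.mul_sum]
        rw [Finset.sum_comm]
        exact Finset.sum_congr rfl fun m _ => Finset.sum_congr rfl fun j _ => by ring
    _ = ∑ m ∈ Finset.range d, q.coeff m * h m :=
        Finset.sum_congr rfl fun m hm => by
          rw [stepA m (Finset.mem_range.1 hm)]
    _ = Lam d h q := by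
        rw [Lam, Finset.sum_range_succ, hcoeffd, mul_zero, add_zero]
        exact Finset.sum_congr rfl fun m _ => mul_comm _ _
    _ = h d := hLq

lemma degree_fin2 (m : Fin 2 →₀ ℕ) : Finsupp.degree m = m 0 + m 1 := by
  rw [Finsupp.degree, ← Fin.sum_univ_two (fun i => m i)]
  exact Finset.sum_subset (Finset.subset_univ _) (fun i _ hi => Finsupp.notMem_support_iff.1 hi)

lemma msum (m : Fin 2 →₀ ℕ) : m = Finsupp.single 0 (m 0) + Finsupp.single 1 (m 1) := by
  ext i
  fin_cases i <;> simp [Finsupp.single_apply]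

lemma mono2_apply0 (k l : ℕ) :
    (Finsupp.single (0 : Fin 2) k + Finsupp.single 1 l : Fin 2 →₀ ℕ) 0 = k := by
  simp [Finsupp.single_apply]

lemma mono2_apply1 (k l : ℕ) :
    (Finsupp.single (0 : Fin 2) k + Finsupp.single 1 l : Fin 2 →₀ ℕ) 1 = l := by
  simp [Finsupp.single_apply]

end WaringAux

open MvPolynomial

lemma lin_pow (a b : ℝ) (d : ℕ) :
    (lin a b) ^ d = ∑ k ∈ Finset.range (d+1),
      monomial (Finsupp.single (0 : Fin 2) k + Finsupp.single 1 (d-k))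
        ((d.choose k : ℝ) * a ^ k * b ^ (d-k)) := by
  rw [lin, add_pow]
  refine Finset.sum_congr rfl fun k hk => ?_
  rw [smul_pow, smul_pow, X_pow_eq_monomial, X_pow_eq_monomial,
    smul_monomial, smul_monomial, monomial_mul]
  rw [show ((d.choose k : MvPolynomial (Fin 2) ℝ)) = C ((d.choose k : ℝ)) by simp]
  rw [mul_comm _ (C _), C_mul_monomial]
  congr 1
  simp only [smul_eq_mul, mul_one]
  ring

lemma coeff_lin_pow_eq (a b : ℝ) {d k : ℕ} (hk : k ≤ d) :
    coeff (Finsupp.single (0 : Fin 2) k + Finsupp.single 1 (d-k)) ((lin a b) ^ d)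
      = (d.choose k : ℝ) * a ^ k * b ^ (d-k) := by
  classical
  rw [lin_pow, coeff_sum, Finset.sum_eq_single k]
  · rw [coeff_monomial, if_pos rfl]
  · intro k' _ hne
    rw [coeff_monomial, if_neg]
    intro hEq
    apply hne
    have := congrArg (fun g : Fin 2 →₀ ℕ => g 0) hEq
    simpa [mono2_apply0] using this
  · intro hk'
    exact absurd (Finset.mem_range.2 (by omega)) hk'

lemma coeff_lin_pow_ne (a b : ℝ) (d : ℕ) (m : Fin 2 →₀ ℕ) (hm : m 0 + m 1 ≠ d) :
    coeff m ((lin a b) ^ d) = 0 := by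
  classical
  rw [lin_pow, coeff_sum]
  refine Finset.sum_eq_zero fun k hk => ?_
  rw [coeff_monomial, if_neg]
  intro hEq
  apply hm
  have h0 := congrArg (fun g : Fin 2 →₀ ℕ => g 0) hEq
  have h1 := congrArg (fun g : Fin 2 →₀ ℕ => g 1) hEq
  simp only [mono2_apply0, mono2_apply1] at h0 h1
  have hkd : k < d + 1 := Finset.mem_range.1 hk
  omega

/-- Every real binary form of degree d ≥ 1 has real Waring rank at most d. -/
theorem stmt_3 (d : ℕ) (hd : 1 ≤ d) (f : MvPolynomial (Fin 2) ℝ)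
    (hf : f.IsHomogeneous d) : hasWaringDecomp d d f := by
  classical
  set a : ℕ → ℝ := fun i => coeff (Finsupp.single (0 : Fin 2) i + Finsupp.single 1 (d-i)) f
    with hadef
  set h : ℕ → ℝ := fun k => a (d-k) / (d.choose (d-k) : ℝ) with hhdef
  have hvan : ∀ m : Fin 2 →₀ ℕ, m 0 + m 1 ≠ d → coeff m f = 0 := fun m hm =>
    hf.coeff_eq_zero (by rw [degree_fin2]; exact hm)
  have hcoeff : ∀ m : Fin 2 →₀ ℕ, m 0 + m 1 = d → coeff m f = a (m 0) := by
    intro m hm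
    have e1 : d - m 0 = m 1 := by omega
    show coeff m f = coeff (Finsupp.single (0 : Fin 2) (m 0) + Finsupp.single 1 (d - m 0)) f
    rw [e1]
    conv_lhs => rw [msum m]
  by_cases hcase : ∃ k < d, h k ≠ 0
  · obtain ⟨r, hrinj, hF⟩ := core ⟨0, hd⟩ h hcase
    obtain ⟨c, hc⟩ := moments hd h r hrinj hF
    refine ⟨c, fun _ => 1, r, ?_⟩
    apply MvPolynomial.ext
    intro m
    rw [coeff_sum]
    by_cases hm : m 0 + m 1 = d
    · have hm0 : m 0 ≤ d := by omega
      have hm1 : m 1 = d - m 0 := by omega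
      have hrw : ∀ j, coeff m ((lin 1 (r j)) ^ d)
          = (d.choose (m 0) : ℝ) * (r j) ^ (d - m 0) := by
        intro j
        conv_lhs => rw [msum m, hm1]
        rw [coeff_lin_pow_eq 1 (r j) hm0, one_pow, mul_one]
      have hsum : ∑ j, coeff m (c j • (lin 1 (r j)) ^ d)
          = (d.choose (m 0) : ℝ) * ∑ j, c j * (r j) ^ (d - m 0) := by
        rw [Finset.mul_sum]
        refine Finset.sum_congr rfl fun j _ => ?_
        rw [coeff_smul, hrw j, smul_eq_mul]
        ring
      rw [hsum, hc (d - m 0) (by omega), hhdef]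
      have e1 : d - (d - m 0) = m 0 := by omega
      simp only [e1]
      rw [hcoeff m hm]
      have hch : (d.choose (m 0) : ℝ) ≠ 0 := Nat.cast_ne_zero.2 (Nat.choose_pos hm0).ne'
      field_simp
    · rw [hvan m hm]
      symm
      refine Finset.sum_eq_zero fun j _ => ?_
      rw [coeff_smul, coeff_lin_pow_ne 1 (r j) d m hm, smul_zero]
  · push_neg at hcase
    have hai : ∀ i, 1 ≤ i → i ≤ d → a i = 0 := by
      intro i h1 h2
      have hz := hcase (d - i) (by omega)
      rw [hhdef] at hz
      have e1 : d - (d - i) = i := by omega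
      simp only [e1] at hz
      have hch : (d.choose i : ℝ) ≠ 0 := Nat.cast_ne_zero.2 (Nat.choose_pos h2).ne'
      exact (div_eq_zero_iff.1 hz).resolve_right hch
    refine ⟨fun j => if j = ⟨0, hd⟩ then a 0 else 0, fun _ => 0, fun _ => 1, ?_⟩
    have hsum : ∑ j : Fin d, (if j = (⟨0, hd⟩ : Fin d) then a 0 else 0) • (lin (0:ℝ) 1) ^ d
        = a 0 • (lin (0:ℝ) 1) ^ d := by
      rw [← Finset.sum_smul]
      congr 1
      simp
    rw [hsum]
    have hlin01 : lin (0:ℝ) 1 = MvPolynomial.X 1 := by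
      rw [lin]; simp
    rw [hlin01]
    apply MvPolynomial.ext
    intro m
    rw [X_pow_eq_monomial, coeff_smul, coeff_monomial, smul_eq_mul]
    by_cases hm : m 0 + m 1 = d
    · by_cases hm0 : m 0 = 0
      · have hmm : Finsupp.single (1 : Fin 2) d = m := by
          conv_rhs => rw [msum m]
          rw [hm0, show m 1 = d by omega]
          simp
        rw [if_pos hmm, mul_one, hcoeff m hm, hm0]
      · have hne : Finsupp.single (1 : Fin 2) d ≠ m := by
          intro hEq
          apply hm0
          have := congrArg (fun g : Fin 2 →₀ ℕ => g 0) hEq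
          simpa [Finsupp.single_apply] using this.symm
        rw [if_neg hne, mul_zero, hcoeff m hm]
        exact hai (m 0) (by omega) (by omega)
    · have hne : Finsupp.single (1 : Fin 2) d ≠ m := by
        intro hEq
        apply hm
        have h0 := congrArg (fun g : Fin 2 →₀ ℕ => g 0) hEq
        have h1 := congrArg (fun g : Fin 2 →₀ ℕ => g 1) hEq
        simp [Finsupp.single_apply, show (1 : Fin 2) ≠ 0 from by decide] at h0 h1
        omega
      rw [if_neg hne, mul_zero, hvan m hm]
end

section
/- For every d ≥ 1 and every integer m with 1 ≤ m ≤ d, there exists a real binary form f of degree d whose real Waring rank is exactly m. -/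
open MvPolynomial

open Finset Matrix



/-- exponent (k, j) -/
noncomputable def E (k j : ℕ) : Fin 2 →₀ ℕ := Finsupp.single 0 k + Finsupp.single 1 j

@[simp] lemma E_apply0 (k j : ℕ) : E k j 0 = k := by
  simp [E, Finsupp.single_apply]

@[simp] lemma E_apply1 (k j : ℕ) : E k j 1 = j := by
  simp [E, Finsupp.single_apply]

lemma E_eq_iff {k j k' j' : ℕ} : E k j = E k' j' ↔ (k = k' ∧ j = j') := by
  constructor
  · intro h
    exact ⟨by simpa using congrArg (fun e => e 0) h, by simpa using congrArg (fun e => e 1) h⟩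
  · rintro ⟨rfl, rfl⟩; rfl

lemma eq_E_self (e : Fin 2 →₀ ℕ) : e = E (e 0) (e 1) := by
  ext x
  fin_cases x <;> simp

lemma degree_fin2_s4 (e : Fin 2 →₀ ℕ) : e.degree = e 0 + e 1 := by
  rw [Finsupp.degree_apply, Finset.sum_subset (Finset.subset_univ _)]
  · exact Fin.sum_univ_two e
  · intro x _ hx; simpa using (Finsupp.notMem_support_iff.mp hx)

lemma degree_E (k j : ℕ) : (E k j).degree = k + j := by
  rw [degree_fin2_s4]; simp

lemma lin_pow_term (a b : ℝ) (i j : ℕ) :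
    (a • (X 0 : MvPolynomial (Fin 2) ℝ)) ^ i * (b • X 1) ^ j
      = monomial (E i j) (a ^ i * b ^ j) := by
  rw [smul_pow, smul_pow, X_pow_eq_monomial, X_pow_eq_monomial, smul_monomial, smul_monomial,
    monomial_mul]
  simp [E, smul_eq_mul]

lemma X_pow_mul_X_pow (k j : ℕ) :
    (X 0 : MvPolynomial (Fin 2) ℝ) ^ k * X 1 ^ j = monomial (E k j) 1 := by
  rw [X_pow_eq_monomial, X_pow_eq_monomial, monomial_mul, one_mul]
  rfl

lemma coeff_lin_pow (a b : ℝ) (d k : ℕ) (hk : k ≤ d) :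
    coeff (E k (d - k)) ((lin a b) ^ d) = (d.choose k : ℝ) * a ^ k * b ^ (d - k) := by
  classical
  rw [lin, add_pow, coeff_sum, Finset.sum_eq_single k]
  · rw [lin_pow_term]
    have : ((d.choose k : ℕ) : MvPolynomial (Fin 2) ℝ) = C ((d.choose k : ℕ) : ℝ) :=
      (C_eq_coe_nat _).symm
    rw [this, mul_comm, C_mul_monomial, coeff_monomial]
    simp [mul_comm, mul_assoc, mul_left_comm]
  · intro i hi hik
    rw [lin_pow_term]
    have : ((d.choose i : ℕ) : MvPolynomial (Fin 2) ℝ) = C ((d.choose i : ℕ) : ℝ) :=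
      (C_eq_coe_nat _).symm
    rw [this, mul_comm, C_mul_monomial, coeff_monomial]
    have hne : ¬ (E i (d - i) = E k (d - k)) := fun h => hik (E_eq_iff.mp h).1
    simp [hne]
  · intro h
    exact absurd (Finset.mem_range.mpr (Nat.lt_succ_of_le hk)) h

lemma coeff_decomp (d : ℕ) {r : ℕ} (c a b : Fin r → ℝ) (k : ℕ) (hk : k ≤ d) :
    coeff (E k (d - k)) (∑ i, c i • (lin (a i) (b i)) ^ d)
      = (d.choose k : ℝ) * ∑ i, c i * (a i) ^ k * (b i) ^ (d - k) := by
  rw [coeff_sum, Finset.mul_sum]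
  apply Finset.sum_congr rfl
  intro i _
  rw [coeff_smul, coeff_lin_pow _ _ _ _ hk]
  rw [smul_eq_mul]; ring
lemma eval_homog {p : MvPolynomial (Fin 2) ℝ} {s : ℕ} (hp : p.IsHomogeneous s) (a b : ℝ) :
    eval ![a, b] p = ∑ l ∈ Finset.range (s+1), coeff (E l (s - l)) p * a ^ l * b ^ (s - l) := by
  classical
  set F : (Fin 2 →₀ ℕ) → ℝ := fun e => coeff e p * a ^ (e 0) * b ^ (e 1) with hF
  have h1 : eval ![a, b] p = ∑ e ∈ p.support, F e := by
    rw [eval_eq']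
    apply Finset.sum_congr rfl
    intro e _
    rw [Fin.prod_univ_two]
    simp [F, mul_assoc]
  have hsub : p.support ⊆ (Finset.range (s+1)).image (fun l => E l (s - l)) := by
    intro e he
    have hdeg : e.degree = s := by
      by_contra hne
      exact (mem_support_iff.mp he) (hp.coeff_eq_zero hne)
    have hd2 : e 0 + e 1 = s := by rw [← degree_fin2_s4, hdeg]
    refine Finset.mem_image.mpr ⟨e 0, Finset.mem_range.mpr (by omega), ?_⟩
    have : s - e 0 = e 1 := by omega
    rw [this]
    exact (eq_E_self e).symm
  have h2 : ∑ e ∈ p.support, F e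
      = ∑ e ∈ (Finset.range (s+1)).image (fun l => E l (s - l)), F e := by
    apply Finset.sum_subset hsub
    intro e _ he
    simp [F, notMem_support_iff.mp he]
  have h3 : ∑ e ∈ (Finset.range (s+1)).image (fun l => E l (s - l)), F e
      = ∑ l ∈ Finset.range (s+1), F (E l (s - l)) := by
    apply Finset.sum_image
    intro x _ y _ hxy
    have := congrArg (fun e => e 0) hxy
    simpa using this
  rw [h1, h2, h3]
  simp [F]

lemma hankel (d r s j : ℕ) (c a b : Fin r → ℝ) (g : ℕ → ℝ)
    (hg : ∀ k, k ≤ d → g k = ∑ i, c i * (a i) ^ k * (b i) ^ (d - k))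
    {p : MvPolynomial (Fin 2) ℝ} (hp : p.IsHomogeneous s)
    (hvan : ∀ i, eval ![a i, b i] p = 0) (hsj : s + j ≤ d) :
    ∑ l ∈ Finset.range (s+1), coeff (E l (s - l)) p * g (l + j) = 0 := by
  have step : ∀ l ∈ Finset.range (s+1),
      coeff (E l (s - l)) p * g (l + j)
        = ∑ i, (c i * (a i) ^ j * (b i) ^ (d - s - j))
            * (coeff (E l (s - l)) p * (a i) ^ l * (b i) ^ (s - l)) := by
    intro l hl
    have hls : l ≤ s := by simpa using Nat.lt_succ_iff.mp (Finset.mem_range.mp hl)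
    rw [hg (l + j) (by omega), Finset.mul_sum]
    apply Finset.sum_congr rfl
    intro i _
    have h1 : (a i) ^ (l + j) = (a i) ^ l * (a i) ^ j := pow_add _ _ _
    have h2 : (b i) ^ (d - (l + j)) = (b i) ^ (d - s - j) * (b i) ^ (s - l) := by
      rw [← pow_add]
      congr 1
      omega
    rw [h1, h2]
    ring
  rw [Finset.sum_congr rfl step, Finset.sum_comm]
  apply Finset.sum_eq_zero
  intro i _
  rw [← Finset.mul_sum]
  have := eval_homog hp (a i) (b i)
  rw [hvan i] at this
  rw [← this]
  ring
lemma E_zero_eq (j : ℕ) : E 0 j = Finsupp.single 1 j := by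
  rw [E, Finsupp.single_zero, zero_add]

lemma homog_smul_X (cc : ℝ) (i : Fin 2) : ((cc • X i : MvPolynomial (Fin 2) ℝ)).IsHomogeneous 1 := by
  rw [smul_eq_C_mul]
  simpa using (isHomogeneous_C (Fin 2) cc).mul (isHomogeneous_X ℝ i)

lemma homog_lin_factor (aa bb : ℝ) :
    ((bb • X 0 - aa • X 1 : MvPolynomial (Fin 2) ℝ)).IsHomogeneous 1 :=
  (homog_smul_X bb 0).sub (homog_smul_X aa 1)

lemma coeff_prod_lin {r : ℕ} (a b : Fin r → ℝ) (F : Finset (Fin r)) :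
    coeff (E 0 F.card) (∏ i ∈ F, (b i • X 0 - a i • X 1)) = ∏ i ∈ F, (-a i) := by
  classical
  induction F using Finset.induction_on with
  | empty => simp [E_zero_eq]
  | @insert x F hxF ih =>
    rw [Finset.prod_insert hxF, Finset.prod_insert hxF, Finset.card_insert_of_notMem hxF]
    rw [sub_mul, smul_mul_assoc, smul_mul_assoc, coeff_sub, coeff_smul, coeff_smul]
    have h1 : coeff (E 0 (F.card + 1)) ((X 0 : MvPolynomial (Fin 2) ℝ) * ∏ i ∈ F, (b i • X 0 - a i • X 1)) = 0 := by
      rw [mul_comm, coeff_mul_X']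
      have : (0 : Fin 2) ∉ (E 0 (F.card + 1)).support := by
        simp [Finsupp.mem_support_iff]
      rw [if_neg this]
    have h2 : coeff (E 0 (F.card + 1)) ((X 1 : MvPolynomial (Fin 2) ℝ) * ∏ i ∈ F, (b i • X 0 - a i • X 1)) = coeff (E 0 F.card) (∏ i ∈ F, (b i • X 0 - a i • X 1)) := by
      have heq : E 0 (F.card + 1) = Finsupp.single 1 1 + E 0 F.card := by
        rw [E_zero_eq, E_zero_eq, ← Finsupp.single_add]
        rw [Nat.add_comm]
      rw [heq, coeff_X_mul]
    rw [h1, h2, ih]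
    rw [smul_zero, smul_eq_mul]
    ring

lemma LB (d r : ℕ) (hd : 1 ≤ d) (hr : r < d) :
    ¬ hasWaringDecomp d r (X 0 * X 1 ^ (d - 1)) := by
  classical
  rintro ⟨c0, a0, b0, hf⟩
  set c : Fin r → ℝ := fun i => if a0 i = 0 ∧ b0 i = 0 then 0 else c0 i with hc
  set a : Fin r → ℝ := fun i => if a0 i = 0 ∧ b0 i = 0 then 1 else a0 i with ha
  set b : Fin r → ℝ := b0 with hb
  have hf' : (X 0 * X 1 ^ (d - 1) : MvPolynomial (Fin 2) ℝ)
      = ∑ i, c i • (lin (a i) (b i)) ^ d := by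
    rw [hf]
    apply Finset.sum_congr rfl
    intro i _
    by_cases h : a0 i = 0 ∧ b0 i = 0
    · simp only [hc, ha, hb, if_pos h, h.1, h.2, lin]
      rw [zero_smul, zero_smul, zero_add, zero_pow (by omega : d ≠ 0)]
      simp
    · simp [hc, ha, hb, if_neg h]
  set F : Finset (Fin r) := Finset.univ.filter (fun i => a i ≠ 0) with hF
  set ε : ℕ := if F = Finset.univ then 0 else 1 with hε
  set q : MvPolynomial (Fin 2) ℝ := ∏ i ∈ F, (b i • X 0 - a i • X 1) with hq
  set p : MvPolynomial (Fin 2) ℝ := X 0 ^ ε * q with hp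
  set s : ℕ := ε + F.card with hs
  have hq_homog : q.IsHomogeneous F.card := by
    have := IsHomogeneous.prod F (fun i => b i • X 0 - a i • X 1) (fun _ => 1)
      (fun i _ => homog_lin_factor (a i) (b i))
    simpa using this
  have hp_homog : p.IsHomogeneous s := by
    have h1 : ((X 0 : MvPolynomial (Fin 2) ℝ) ^ ε).IsHomogeneous ε := by
      simpa using (isHomogeneous_X ℝ (0 : Fin 2)).pow ε
    exact h1.mul hq_homog
  have hεle : ε ≤ 1 := by
    by_cases h : F = Finset.univ <;> simp [hε, h]
  have hcard : F.card ≤ r := by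
    have := Finset.card_filter_le Finset.univ (fun i => a i ≠ 0)
    simpa [hF] using this
  have hvan : ∀ i, eval ![a i, b i] p = 0 := by
    intro i
    rw [hp, eval_mul]
    by_cases hi : i ∈ F
    · have : eval ![a i, b i] q = 0 := by
        rw [hq, eval_prod]
        apply Finset.prod_eq_zero hi
        rw [smul_eq_C_mul, smul_eq_C_mul]
        simp
        ring
      rw [this, mul_zero]
    · have hai : a i = 0 := by
        by_contra hne
        exact hi (Finset.mem_filter.mpr ⟨Finset.mem_univ i, hne⟩)
      have hε1 : ε = 1 := by
        rw [hε, if_neg]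
        intro h
        exact hi (h ▸ Finset.mem_univ i)
      rw [eval_pow, eval_X, hε1]
      simp [hai]
  set g : ℕ → ℝ := fun k => ∑ i, c i * (a i) ^ k * (b i) ^ (d - k) with hg
  have hcoeff : ∀ k, k ≤ d → (d.choose k : ℝ) * g k = (if k = 1 then 1 else 0) := by
    intro k hk
    have h2 := coeff_decomp d c a b k hk
    rw [← hf'] at h2
    rw [hg, ← h2]
    have hX : (X 0 * X 1 ^ (d - 1) : MvPolynomial (Fin 2) ℝ) = X 0 ^ 1 * X 1 ^ (d - 1) := by
      rw [pow_one]
    rw [hX, X_pow_mul_X_pow, coeff_monomial]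
    by_cases h1 : k = 1
    · subst h1
      rw [if_pos rfl, if_pos rfl]
    · rw [if_neg h1, if_neg]
      intro hcontra
      exact h1 ((E_eq_iff.mp hcontra).1.symm)
  have hdR : (d : ℝ) ≠ 0 := Nat.cast_ne_zero.mpr (by omega)
  have hg1 : g 1 = (d : ℝ)⁻¹ := by
    have := hcoeff 1 hd
    rw [if_pos rfl, Nat.choose_one_right] at this
    field_simp at this ⊢
    linarith [this]
  have hg0 : ∀ k, k ≤ d → k ≠ 1 → g k = 0 := by
    intro k hk hk1
    have := hcoeff k hk
    rw [if_neg hk1] at this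
    have hch : (d.choose k : ℝ) ≠ 0 :=
      Nat.cast_ne_zero.mpr (Nat.choose_pos hk).ne'
    exact (mul_eq_zero.mp this).resolve_left hch
  have hs_j : s + (1 - ε) ≤ d := by omega
  have H := hankel d r s (1 - ε) c a b g (fun k _ => rfl) hp_homog hvan hs_j
  rw [Finset.sum_eq_single ε] at H
  · have hεsum : ε + (1 - ε) = 1 := by omega
    rw [hεsum, hg1] at H
    have hcoeffp : coeff (E ε (s - ε)) p = 0 := by
      have hinv : (d : ℝ)⁻¹ ≠ 0 := inv_ne_zero hdR
      exact (mul_eq_zero.mp H).resolve_right hinv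
    have hprod : coeff (E ε (s - ε)) p = ∏ i ∈ F, (-a i) := by
      by_cases h : F = Finset.univ
      · have hε0 : ε = 0 := by rw [hε, if_pos h]
        rw [hp, hε0, pow_zero, one_mul]
        have h00 : s - 0 = F.card := by omega
        rw [h00, hq]
        exact coeff_prod_lin a b F
      · have hε1 : ε = 1 := by rw [hε, if_neg h]
        rw [hp, hε1, pow_one]
        have h1 : E 1 (s - 1) = Finsupp.single 0 1 + E 0 (F.card) := by
          rw [E_zero_eq]
          rw [E]
          congr 1
          congr 1
          omega
        rw [h1, coeff_X_mul, hq]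
        exact coeff_prod_lin a b F
    rw [hprod] at hcoeffp
    have : ∏ i ∈ F, (-a i) ≠ 0 := by
      apply Finset.prod_ne_zero_iff.mpr
      intro i hi
      have : a i ≠ 0 := (Finset.mem_filter.mp hi).2
      simpa using this
    exact this hcoeffp
  · intro l hl hlε
    have hls : l ≤ s := Nat.lt_succ_iff.mp (Finset.mem_range.mp hl)
    have : g (l + (1 - ε)) = 0 := by
      apply hg0
      · omega
      · omega
    rw [this, mul_zero]
  · intro hcontra
    exact absurd (Finset.mem_range.mpr (by omega : ε < s + 1)) hcontra


noncomputable def wnode (d : ℕ) (j : Fin d) : ℝ := (j : ℝ) - ((d : ℝ) - 1) / 2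

lemma wnode_inj (d : ℕ) : Function.Injective (wnode d) := by
  intro i j hij
  have : (i : ℝ) = (j : ℝ) := by
    simpa [wnode, sub_left_inj] using hij
  exact Fin.ext (Nat.cast_injective this)

lemma wnode_sum (d : ℕ) (hd : 1 ≤ d) : ∑ j : Fin d, wnode d j = 0 := by
  have h1 : ∑ j : Fin d, ((j : ℕ) : ℝ) = ∑ i ∈ Finset.range d, (i : ℝ) :=
    Fin.sum_univ_eq_sum_range _ d
  have h2 := congrArg (Nat.cast : ℕ → ℝ) (Finset.sum_range_id_mul_two d)
  push_cast [Nat.cast_sub hd] at h2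
  have h3 : ∑ j : Fin d, wnode d j
      = (∑ j : Fin d, ((j : ℕ) : ℝ)) - d * (((d : ℝ) - 1) / 2) := by
    simp only [wnode]
    rw [Finset.sum_sub_distrib]
    congr 1
    rw [Finset.sum_const]
    simp [Finset.card_univ, mul_comm]
  rw [h3, h1]
  linarith [h2]

lemma moments_s4 (d : ℕ) (hd : 1 ≤ d) :
    ∃ lam : Fin d → ℝ, ∀ i : ℕ, i ≤ d →
      ∑ j, lam j * (wnode d j) ^ i = if i = d - 1 then (d : ℝ)⁻¹ else 0 := by
  classical
  set A : Matrix (Fin d) (Fin d) ℝ := (Matrix.vandermonde (wnode d)).transpose with hA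
  have hdet : A.det ≠ 0 := by
    rw [hA, Matrix.det_transpose, Matrix.det_vandermonde]
    apply Finset.prod_ne_zero_iff.mpr
    intro i _
    apply Finset.prod_ne_zero_iff.mpr
    intro j hj
    have hij : j ≠ i := (Finset.mem_Ioi.mp hj).ne'
    intro hzero
    have heq : wnode d j = wnode d i := by
      have := sub_eq_zero.mp hzero
      linarith [this]
    exact hij (wnode_inj d heq)
  set t : Fin d → ℝ := fun i => if (i : ℕ) = d - 1 then (d : ℝ)⁻¹ else 0 with ht
  set lam : Fin d → ℝ := A⁻¹.mulVec t with hlam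
  have hsol : A.mulVec lam = t := by
    rw [hlam, Matrix.mulVec_mulVec, Matrix.mul_nonsing_inv _ (isUnit_iff_ne_zero.mpr hdet),
      Matrix.one_mulVec]
  have hfin : ∀ i : Fin d, ∑ j, lam j * (wnode d j) ^ (i : ℕ)
      = if (i : ℕ) = d - 1 then (d : ℝ)⁻¹ else 0 := by
    intro i
    have h0 := congrFun hsol i
    rw [Matrix.mulVec, dotProduct] at h0
    calc ∑ j, lam j * (wnode d j) ^ (i : ℕ)
        = ∑ j, A i j * lam j := by
          apply Finset.sum_congr rfl
          intro j _
          rw [hA]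
          simp [Matrix.vandermonde, mul_comm]
      _ = t i := h0
      _ = if (i : ℕ) = d - 1 then (d : ℝ)⁻¹ else 0 := rfl
  refine ⟨lam, ?_⟩
  intro i hi
  by_cases hilt : i < d
  · have := hfin ⟨i, hilt⟩
    simpa using this
  · -- i = d
    have hieq : i = d := by omega
    rw [hieq, if_neg (by omega)]
    -- use the polynomial Q = ∏ (X - C (wnode d j))
    set Q : Polynomial ℝ := ∏ j : Fin d, (Polynomial.X - Polynomial.C (wnode d j)) with hQ
    have hmonic : Q.Monic := Polynomial.monic_prod_of_monic _ _
      (fun j _ => Polynomial.monic_X_sub_C _)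
    have hdeg : Q.natDegree = d := by
      rw [hQ, Polynomial.natDegree_prod _ _ (fun j _ => Polynomial.X_sub_C_ne_zero _)]
      simp [Polynomial.natDegree_X_sub_C]
    have hnext : Q.coeff (d - 1) = 0 := by
      have h1 := Polynomial.prod_X_sub_C_nextCoeff (s := Finset.univ) (wnode d)
      rw [← hQ] at h1
      rw [wnode_sum d hd, neg_zero] at h1
      have h2 : Q.nextCoeff = Q.coeff (d - 1) := by
        rw [Polynomial.nextCoeff_of_natDegree_pos (by omega : 0 < Q.natDegree), hdeg]
      rw [← h2, h1]
    have hpow : ∀ j : Fin d, (wnode d j) ^ d = -∑ l ∈ Finset.range d, Q.coeff l * (wnode d j) ^ l := by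
      intro j
      have heval : Q.eval (wnode d j) = 0 := by
        rw [hQ, Polynomial.eval_prod]
        apply Finset.prod_eq_zero (Finset.mem_univ j)
        simp
      rw [Polynomial.eval_eq_sum_range, hdeg, Finset.sum_range_succ] at heval
      have hc : Q.coeff d = 1 := by
        have := hmonic.coeff_natDegree
        rwa [hdeg] at this
      rw [hc, one_mul] at heval
      linarith [heval]
    have hlow : ∀ l : ℕ, l < d → ∑ j, lam j * (wnode d j) ^ l
        = if l = d - 1 then (d : ℝ)⁻¹ else 0 := by
      intro l hl
      have := hfin ⟨l, hl⟩
      simpa using this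
    calc ∑ j, lam j * (wnode d j) ^ d
        = ∑ j, lam j * -∑ l ∈ Finset.range d, Q.coeff l * (wnode d j) ^ l := by
          apply Finset.sum_congr rfl; intro j _; rw [hpow j]
      _ = -∑ j, ∑ l ∈ Finset.range d, Q.coeff l * (lam j * (wnode d j) ^ l) := by
          rw [← Finset.sum_neg_distrib]
          apply Finset.sum_congr rfl
          intro j _
          have hmm : lam j * ∑ l ∈ Finset.range d, Q.coeff l * (wnode d j) ^ l
              = ∑ l ∈ Finset.range d, Q.coeff l * (lam j * (wnode d j) ^ l) := by
            rw [Finset.mul_sum]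
            apply Finset.sum_congr rfl
            intro l _
            ring
          rw [mul_neg, hmm]
      _ = -∑ l ∈ Finset.range d, ∑ j, Q.coeff l * (lam j * (wnode d j) ^ l) := by
          rw [Finset.sum_comm]
      _ = -∑ l ∈ Finset.range d, Q.coeff l * ∑ j, lam j * (wnode d j) ^ l := by
          congr 1
          apply Finset.sum_congr rfl
          intro l _
          rw [Finset.mul_sum]
      _ = 0 := by
          rw [Finset.sum_eq_single (d - 1)]
          · rw [hlow (d-1) (by omega), if_pos rfl, hnext]
            simp
          · intro l hl hlne
            rw [hlow l (Finset.mem_range.mp hl), if_neg hlne, mul_zero]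
          · intro h
            exact absurd (Finset.mem_range.mpr (by omega : d - 1 < d)) h

lemma homog_lin (aa bb : ℝ) : (lin aa bb).IsHomogeneous 1 :=
  (homog_smul_X aa 0).add (homog_smul_X bb 1)

lemma homog_lin_pow_smul (cc aa bb : ℝ) (d : ℕ) :
    ((cc • (lin aa bb) ^ d : MvPolynomial (Fin 2) ℝ)).IsHomogeneous d := by
  rw [smul_eq_C_mul]
  have := (isHomogeneous_C (Fin 2) cc).mul ((homog_lin aa bb).pow d)
  simpa using this

lemma homog_ext {f g : MvPolynomial (Fin 2) ℝ} {n : ℕ}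
    (hf : f.IsHomogeneous n) (hg : g.IsHomogeneous n)
    (h : ∀ k, k ≤ n → coeff (E k (n - k)) f = coeff (E k (n - k)) g) : f = g := by
  ext e
  by_cases hdeg : e.degree = n
  · have h20 : e 0 + e 1 = n := by rw [← degree_fin2_s4]; exact hdeg
    have he : e = E (e 0) (n - e 0) := by
      rw [show n - e 0 = e 1 by omega]
      exact eq_E_self e
    rw [he]
    exact h (e 0) (by omega)
  · rw [hf.coeff_eq_zero hdeg, hg.coeff_eq_zero hdeg]

lemma coeff_target (d k : ℕ) (hd : 1 ≤ d) (hk : k ≤ d) :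
    coeff (E k (d - k)) (X 0 * X 1 ^ (d - 1) : MvPolynomial (Fin 2) ℝ)
      = if k = 1 then 1 else 0 := by
  rw [show (X 0 * X 1 ^ (d - 1) : MvPolynomial (Fin 2) ℝ) = X 0 ^ 1 * X 1 ^ (d - 1) by rw [pow_one],
    X_pow_mul_X_pow, coeff_monomial]
  by_cases h1 : k = 1
  · subst h1
    rw [if_pos rfl, if_pos rfl]
  · rw [if_neg h1, if_neg (fun hc => h1 ((E_eq_iff.mp hc).1.symm))]

lemma decompF (d : ℕ) (hd : 1 ≤ d) (lam : Fin d → ℝ)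
    (hlam : ∀ i : ℕ, i ≤ d →
      ∑ j, lam j * (wnode d j) ^ i = if i = d - 1 then (d : ℝ)⁻¹ else 0) :
    (X 0 * X 1 ^ (d - 1) : MvPolynomial (Fin 2) ℝ)
      = ∑ j, lam j • (lin 1 (wnode d j)) ^ d := by
  apply homog_ext
  · have h1 : ((X 0 : MvPolynomial (Fin 2) ℝ)).IsHomogeneous 1 := isHomogeneous_X ℝ 0
    have h2 := h1.mul ((isHomogeneous_X ℝ (1 : Fin 2)).pow (d - 1))
    have : 1 + 1 * (d - 1) = d := by omega
    rwa [this] at h2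
  · exact IsHomogeneous.sum _ _ _ (fun j _ => homog_lin_pow_smul _ _ _ _)
  · intro k hk
    rw [coeff_target d k hd hk, coeff_decomp d lam (fun _ => 1) (fun j => wnode d j) k hk]
    simp only [one_pow, mul_one]
    have hdk : d - k ≤ d := by omega
    rw [hlam (d - k) hdk]
    by_cases h1 : k = 1
    · subst h1
      rw [if_pos rfl, if_pos (by omega : d - 1 = d - 1)]
      rw [Nat.choose_one_right]
      field_simp
    · rw [if_neg h1, if_neg (by omega : ¬ (d - k = d - 1)), mul_zero]


/-- For every d ≥ 1 and 1 ≤ m ≤ d there is a real binary form of degree d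
whose real Waring rank is exactly m. -/
theorem stmt_4 (d m : ℕ) (hd : 1 ≤ d) (hm1 : 1 ≤ m) (hmd : m ≤ d) :
    ∃ f : MvPolynomial (Fin 2) ℝ, f ≠ 0 ∧ f.IsHomogeneous d ∧
      waringRank d f = m := by
  classical
  obtain ⟨lam, hlam⟩ := moments_s4 d hd
  have hmdm : m + (d - m) = d := by omega
  set ι : Fin m → Fin d := fun j => finCongr hmdm (Fin.castAdd (d - m) j) with hι
  set κ : Fin (d - m) → Fin d := fun j => finCongr hmdm (Fin.natAdd m j) with hκ
  set G : Fin d → MvPolynomial (Fin 2) ℝ := fun j => lam j • (lin 1 (wnode d j)) ^ d with hG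
  set f : MvPolynomial (Fin 2) ℝ := ∑ j, G (ι j) with hf
  have hdecomp : (X 0 * X 1 ^ (d - 1) : MvPolynomial (Fin 2) ℝ) = ∑ j, G j :=
    decompF d hd lam hlam
  have hsplit : (X 0 * X 1 ^ (d - 1) : MvPolynomial (Fin 2) ℝ)
      = f + ∑ j, G (κ j) := by
    rw [hdecomp, hf]
    rw [← Fintype.sum_equiv (finCongr hmdm) (fun j => G (finCongr hmdm j)) G (fun _ => rfl)]
    rw [Fin.sum_univ_add (fun j : Fin (m + (d - m)) => G (finCongr hmdm j))]
  have hmem : hasWaringDecomp d m f :=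
    ⟨fun j => lam (ι j), fun _ => 1, fun j => wnode d (ι j), rfl⟩
  have hlow : ∀ r, hasWaringDecomp d r f → m ≤ r := by
    intro r hr
    by_contra hcon
    push_neg at hcon
    obtain ⟨c, a, b, hfr⟩ := hr
    apply LB d (r + (d - m)) hd (by omega)
    refine ⟨Fin.append c (fun j => lam (κ j)), Fin.append a (fun _ => 1),
      Fin.append b (fun j => wnode d (κ j)), ?_⟩
    rw [hsplit, hfr]
    rw [Fin.sum_univ_add]
    congr 1
    · apply Finset.sum_congr rfl
      intro j _
      rw [Fin.append_left, Fin.append_left, Fin.append_left]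
    · apply Finset.sum_congr rfl
      intro j _
      rw [Fin.append_right, Fin.append_right, Fin.append_right]
  refine ⟨f, ?_, ?_, ?_⟩
  · intro hf0
    apply LB d (d - m) hd (by omega)
    refine ⟨fun j => lam (κ j), fun _ => 1, fun j => wnode d (κ j), ?_⟩
    rw [hsplit, hf0, zero_add]
  · rw [hf]
    exact IsHomogeneous.sum _ _ _ (fun j _ => homog_lin_pow_smul _ _ _ _)
  · apply le_antisymm
    · exact Nat.sInf_le hmem
    · exact le_csInf ⟨m, hmem⟩ hlow
end
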